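/- arXiv:2302.06105 — 5 statements merged into one kernel-verified Lean document; each statement's English description precedes it below -/
import Mathlib

section
/- Let n ≥ 3, p = ⌊(n−1)/2⌋, and let Q be a real linear subspace of the space of n×n real symmetric matrices such that every element of Q is austere. Suppose Q contains a matrix A with tr(A²) = 1 such that the matrices I_n, A², A⁴, …, A^{2p} are ℝ-linearly independent (i.e. Q ∩ B_{n,ℝ} ≠ ∅). Then dim Q ≤ p² + 2p if n = 2p+1, and dim Q ≤ p² + 3p + 2 if n = 2p+2. -/
open Polynomial Finset Matrix


lemma aeval_psum {n : ℕ} (μ : Fin n → ℝ) (k : ℕ) :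
    (MvPolynomial.aeval μ) (MvPolynomial.psum (Fin n) ℝ k) = ∑ a, μ a ^ k := by
  simp [MvPolynomial.psum, map_sum]

lemma esymm_odd_vanish {n p : ℕ} (hn : n ≤ 2*p+2) (μ : Fin n → ℝ)
    (hps : ∀ k ≤ p, ∑ a, μ a ^ (2*k+1) = 0) :
    ∀ j, j ≤ n → Odd j → (Finset.univ.val.map μ).esymm j = 0 := by
  intro j
  induction j using Nat.strong_induction_on with
  | _ j ih =>
    intro hjn hj
    have hNewton := congrArg (MvPolynomial.aeval μ) (MvPolynomial.mul_esymm_eq_sum (Fin n) ℝ j)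
    simp only [_root_.map_mul, map_sum, _root_.map_pow, map_neg, _root_.map_one, map_natCast,
      MvPolynomial.aeval_esymm_eq_multiset_esymm, aeval_psum] at hNewton
    have hz : ∀ a ∈ (Finset.HasAntidiagonal.antidiagonal j).filter (fun a => a.1 < j),
        (-1:ℝ) ^ a.1 * (Finset.univ.val.map μ).esymm a.1 * (∑ b, μ b ^ a.2) = 0 := by
      intro a ha
      simp only [Finset.mem_filter, Finset.HasAntidiagonal.mem_antidiagonal] at ha
      rcases Nat.even_or_odd a.2 with h2 | h2
      · -- a.1 odd
        have h1 : Odd a.1 := by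
          rcases hj with ⟨m, hm⟩
          rcases h2 with ⟨l, hl⟩
          exact ⟨m - l, by omega⟩
        rw [ih a.1 ha.2 (le_trans (le_of_lt ha.2) hjn) h1]
        ring
      · rcases h2 with ⟨l, hl⟩
        have hl' : l ≤ p := by omega
        -- a.2 = 2l+1 ≤ j ≤ n ≤ 2p+2
        have h0 : ∑ b, μ b ^ a.2 = 0 := by rw [hl]; exact hps l hl'
        rw [h0]
        ring
    rw [Finset.sum_congr rfl hz, Finset.sum_const, smul_zero, mul_zero] at hNewton
    have hj0 : (j:ℝ) ≠ 0 := by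
      have := hj.pos
      positivity
    exact (mul_eq_zero.mp hNewton).resolve_left hj0


lemma count_symm {n p : ℕ} (hn : n ≤ 2*p+2) (μ : Fin n → ℝ)
    (hps : ∀ k ≤ p, ∑ a, μ a ^ (2*k+1) = 0) (v : ℝ) :
    (Finset.univ.filter (fun a => μ a = v)).card
      = (Finset.univ.filter (fun a => μ a = -v)).card := by
  classical
  set s : Multiset ℝ := Finset.univ.val.map μ with hs
  have hcard : Multiset.card s = n := by simp [hs]
  have hcard' : Multiset.card (s.map (fun x => -x)) = n := by simp [hs]
  -- the product polynomials agree
  have hprod : ((s.map (fun x => -x)).map (fun r => X + C r)).prod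
      = (s.map (fun r => X + C r)).prod := by
    rw [Multiset.prod_X_add_C_eq_sum_esymm, Multiset.prod_X_add_C_eq_sum_esymm, hcard, hcard']
    refine Finset.sum_congr rfl ?_
    intro j hj
    congr 1
    have : (Multiset.map (fun x => -x) s).esymm j = (-1)^j * s.esymm j := by
      have := Multiset.esymm_neg s j
      simpa using this
    rw [this]
    rcases Nat.even_or_odd j with he | ho
    · rw [he.neg_one_pow, one_mul]
    · rw [esymm_odd_vanish hn μ hps j (by simpa [hcard] using Finset.mem_range_succ_iff.mp hj) ho]
      ring
  -- deduce multiset equality via roots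
  have hmap : s.map (fun x => -x) = s := by
    have h1 : ((s.map (fun x => -x)).map (fun r => X - C r)).prod
        = (s.map (fun r => X - C r)).prod := by
      have e1 : (s.map (fun x => -x)).map (fun r => X - C r) = s.map (fun r => X + C r) := by
        conv_lhs => rw [Multiset.map_map]
        refine Multiset.map_congr rfl ?_
        intro x _
        simp [sub_neg_eq_add]
      have e2 : s.map (fun r => X - C r) = (s.map (fun x => -x)).map (fun r => X + C r) := by
        conv_rhs => rw [Multiset.map_map]
        refine Multiset.map_congr rfl ?_
        intro x _
        simp [sub_eq_add_neg]
      rw [e1, e2, hprod]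
    have := congrArg Polynomial.roots h1
    rwa [Polynomial.roots_multiset_prod_X_sub_C, Polynomial.roots_multiset_prod_X_sub_C] at this
  -- counts
  have hcount : ∀ w : ℝ, s.count w = (Finset.univ.filter (fun a => μ a = w)).card := by
    intro w
    rw [hs, Multiset.count_map]
    simp [Finset.card, Finset.filter, eq_comm]
  have hneg : Multiset.count (-v) (s.map (fun x => -x)) = Multiset.count v s := by
    have : (fun x : ℝ => -x) = Neg.neg := rfl
    rw [this, ← Multiset.count_map_eq_count' Neg.neg s neg_injective v]
  rw [← hcount, ← hcount, ← hneg, hmap]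

lemma tri_card {α : Type*} [DecidableEq α] [LinearOrder α] (s : Finset α) :
    2 * ((s ×ˢ s).filter (fun q => q.1 ≤ q.2)).card = s.card * (s.card + 1) := by
  set L := (s ×ˢ s).filter (fun q => q.1 ≤ q.2) with hL
  set G := (s ×ˢ s).filter (fun q => q.2 ≤ q.1) with hG
  have hcardLG : L.card = G.card := by
    apply Finset.card_bij (fun q _ => Prod.swap q)
    · intro a ha
      simp only [hL, hG, Finset.mem_filter, Finset.mem_product] at ha ⊢
      exact ⟨⟨ha.1.2, ha.1.1⟩, ha.2⟩
    · intro a _ b _ hab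
      exact Prod.swap_injective hab
    · intro b hb
      refine ⟨Prod.swap b, ?_, by simp⟩
      simp only [hL, hG, Finset.mem_filter, Finset.mem_product] at hb ⊢
      exact ⟨⟨hb.1.2, hb.1.1⟩, hb.2⟩
  have hunion : L ∪ G = s ×ˢ s := by
    ext q
    simp only [hL, hG, Finset.mem_union, Finset.mem_filter]
    constructor
    · rintro (h | h) <;> exact h.1
    · intro h
      rcases le_total q.1 q.2 with h' | h'
      · exact Or.inl ⟨h, h'⟩
      · exact Or.inr ⟨h, h'⟩
  have hinter : L ∩ G = s.image (fun a => (a, a)) := by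
    ext q
    simp only [hL, hG, Finset.mem_inter, Finset.mem_filter, Finset.mem_product,
      Finset.mem_image]
    constructor
    · rintro ⟨⟨⟨h1, _⟩, h2⟩, ⟨_, h3⟩⟩
      exact ⟨q.1, h1, Prod.ext rfl (le_antisymm h2 h3)⟩
    · rintro ⟨a, ha, rfl⟩
      exact ⟨⟨⟨ha, ha⟩, le_refl _⟩, ⟨⟨ha, ha⟩, le_refl _⟩⟩
  have hdiag : (s.image (fun a => (a, a))).card = s.card :=
    Finset.card_image_of_injective _ (fun a b h => (Prod.mk.injEq _ _ _ _ ▸ h).1)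
  have := Finset.card_union_add_card_inter L G
  rw [hunion, hinter, hdiag, Finset.card_product] at this
  rw [Nat.mul_add, Nat.mul_one]
  omega

section Counting
variable {n : ℕ} (μ : Fin n → ℝ)

lemma pv_mem_iff (v : ℝ) :
    v ∈ (univ.filter (fun a : Fin n => 0 < μ a)).image μ ↔
      0 < v ∧ (univ.filter (fun a => μ a = v)).Nonempty := by
  simp only [mem_image, mem_filter, mem_univ, true_and]
  constructor
  · rintro ⟨a, ha, rfl⟩
    exact ⟨ha, ⟨a, by simp⟩⟩
  · rintro ⟨hv, ⟨a, ha⟩⟩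
    simp only [mem_filter, mem_univ, true_and] at ha
    exact ⟨a, by rw [ha]; exact hv, ha⟩

lemma nv_eq_neg_pv
    (hsymm : ∀ v : ℝ, (univ.filter (fun a => μ a = v)).card
      = (univ.filter (fun a => μ a = -v)).card) :
    (univ.filter (fun a : Fin n => μ a < 0)).image μ
      = ((univ.filter (fun a : Fin n => 0 < μ a)).image μ).image (fun v => -v) := by
  ext w
  simp only [mem_image, mem_filter, mem_univ, true_and]
  constructor
  · rintro ⟨a, ha, rfl⟩
    have h1 : (univ.filter (fun b => μ b = -(μ a))).card ≠ 0 := by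
      rw [← hsymm (μ a)]
      have : a ∈ univ.filter (fun b => μ b = μ a) := by simp
      exact Finset.card_ne_zero_of_mem this
    obtain ⟨b, hb⟩ := Finset.card_ne_zero.mp h1
    simp only [mem_filter, mem_univ, true_and] at hb
    exact ⟨-(μ a), ⟨b, by rw [hb]; exact by linarith, hb⟩, by ring⟩
  · rintro ⟨v, ⟨a, ha, rfl⟩, rfl⟩
    have h1 : (univ.filter (fun b => μ b = -(μ a))).card ≠ 0 := by
      rw [← hsymm (μ a)]
      have : a ∈ univ.filter (fun b => μ b = μ a) := by simp
      exact Finset.card_ne_zero_of_mem this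
    obtain ⟨b, hb⟩ := Finset.card_ne_zero.mp h1
    simp only [mem_filter, mem_univ, true_and] at hb
    exact ⟨b, by rw [hb]; linarith, hb⟩

lemma neg_card_eq_pos_card
    (hsymm : ∀ v : ℝ, (univ.filter (fun a => μ a = v)).card
      = (univ.filter (fun a => μ a = -v)).card) :
    (univ.filter (fun a : Fin n => μ a < 0)).card
      = (univ.filter (fun a : Fin n => 0 < μ a)).card := by
  classical
  set Pos := univ.filter (fun a : Fin n => 0 < μ a) with hPos
  set Neg := univ.filter (fun a : Fin n => μ a < 0) with hNeg
  set PV := Pos.image μ with hPV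
  set NV := Neg.image μ with hNV
  have hposfib : Pos.card = ∑ v ∈ PV, (univ.filter (fun a => μ a = v)).card := by
    rw [Finset.card_eq_sum_card_fiberwise (f := μ) (t := PV)
      (fun a ha => Finset.mem_image_of_mem μ ha)]
    refine Finset.sum_congr rfl ?_
    intro v hv
    have hv0 : 0 < v := ((pv_mem_iff μ v).mp hv).1
    congr 1
    ext a
    simp only [hPos, mem_filter, mem_univ, true_and]
    constructor
    · rintro ⟨_, h⟩; exact h
    · intro h; exact ⟨by rw [h]; exact hv0, h⟩
  have hnegfib : Neg.card = ∑ v ∈ NV, (univ.filter (fun a => μ a = v)).card := by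
    rw [Finset.card_eq_sum_card_fiberwise (f := μ) (t := NV)
      (fun a ha => Finset.mem_image_of_mem μ ha)]
    refine Finset.sum_congr rfl ?_
    intro v hv
    have hv0 : v < 0 := by
      simp only [hNV, hNeg, mem_image, mem_filter, mem_univ, true_and] at hv
      obtain ⟨a, ha, rfl⟩ := hv
      exact ha
    congr 1
    ext a
    simp only [hNeg, mem_filter, mem_univ, true_and]
    constructor
    · rintro ⟨_, h⟩; exact h
    · intro h; exact ⟨by rw [h]; exact hv0, h⟩
  rw [hposfib, hnegfib, hNV, hNeg, hPV, hPos, nv_eq_neg_pv μ hsymm,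
    Finset.sum_image (by intro x _ y _ h; linarith [neg_injective h] )]
  refine Finset.sum_congr rfl ?_
  intro v _
  exact (hsymm v).symm

lemma sq_card_le_pv_card
    (hsymm : ∀ v : ℝ, (univ.filter (fun a => μ a = v)).card
      = (univ.filter (fun a => μ a = -v)).card) :
    ((univ.image (fun a : Fin n => (μ a)^2)).erase 0).card
      ≤ ((univ.filter (fun a : Fin n => 0 < μ a)).image μ).card := by
  classical
  apply Finset.card_le_card_of_injOn Real.sqrt
  · intro u hu
    simp only [Finset.mem_coe, Finset.mem_erase, mem_image, mem_univ, true_and] at hu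
    obtain ⟨hu0, a, ha⟩ := hu
    have hμa : μ a ≠ 0 := by
      intro h; rw [h] at ha; simp at ha; exact hu0 ha.symm
    have hsqrt : Real.sqrt u = |μ a| := by rw [← ha, Real.sqrt_sq_eq_abs]
    rcases lt_or_gt_of_ne hμa with h | h
    · -- μ a < 0, use symmetry to find positive witness
      have h1 : (univ.filter (fun b => μ b = -(μ a))).card ≠ 0 := by
        rw [← hsymm (μ a)]
        exact Finset.card_ne_zero_of_mem (by simp : a ∈ univ.filter (fun b => μ b = μ a))
      obtain ⟨b, hb⟩ := Finset.card_ne_zero.mp h1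
      simp only [mem_filter, mem_univ, true_and] at hb
      rw [hsqrt, abs_of_neg h, ← hb]
      apply Finset.mem_image_of_mem
      simp only [mem_filter, mem_univ, true_and]
      rw [hb]; linarith
    · rw [hsqrt, abs_of_pos h]
      apply Finset.mem_image_of_mem
      simp only [mem_filter, mem_univ, true_and]
      exact h
  · intro u hu u' hu' h
    simp only [Finset.mem_coe, Finset.mem_erase, mem_image, mem_univ, true_and] at hu hu'
    obtain ⟨_, a, ha⟩ := hu
    obtain ⟨_, a', ha'⟩ := hu'
    have h0 : 0 ≤ u := by rw [← ha]; positivity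
    have h0' : 0 ≤ u' := by rw [← ha']; positivity
    rw [← Real.sq_sqrt h0, ← Real.sq_sqrt h0', h]

lemma trichotomy_card :
    (univ.filter (fun a : Fin n => 0 < μ a)).card + (univ.filter (fun a : Fin n => μ a < 0)).card
      + (univ.filter (fun a : Fin n => μ a = 0)).card = n := by
  classical
  have h1 := Finset.card_filter_add_card_filter_not
    (s := (univ : Finset (Fin n))) (p := fun a => 0 < μ a)
  have h2 : (univ.filter (fun a : Fin n => ¬ 0 < μ a))
      = (univ.filter (fun a : Fin n => μ a < 0)) ∪ (univ.filter (fun a : Fin n => μ a = 0)) := by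
    ext a
    simp only [mem_filter, mem_union, mem_univ, true_and, not_lt]
    constructor
    · intro h
      rcases lt_or_eq_of_le h with h' | h'
      · exact Or.inl h'
      · exact Or.inr h'
    · rintro (h | h)
      · exact h.le
      · exact h.le
  have hdisj : Disjoint (univ.filter (fun a : Fin n => μ a < 0))
      (univ.filter (fun a : Fin n => μ a = 0)) := by
    rw [Finset.disjoint_left]
    intro a ha hb
    simp only [mem_filter, mem_univ, true_and] at ha hb
    rw [hb] at ha
    exact lt_irrefl 0 ha
  rw [h2, Finset.card_union_of_disjoint hdisj] at h1
  simpa [add_assoc] using h1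

lemma counting_main {p : ℕ}
    (hsymm : ∀ v : ℝ, (univ.filter (fun a => μ a = v)).card
      = (univ.filter (fun a => μ a = -v)).card)
    (hsq : p + 1 ≤ (univ.image (fun a : Fin n => (μ a)^2)).card)
    (hnp : n = 2*p+1 ∨ n = 2*p+2)
    (exc : Finset (Fin n × Fin n))
    (hexc : ∀ r ∈ exc, r.1 = r.2 ∧ μ r.1 = 0)
    (hexc_card : (∃ a, μ a = 0) → exc.card = 1) :
    (n = 2*p+1 → (((univ ×ˢ univ).filter
        (fun r : Fin n × Fin n => r.1 ≤ r.2 ∧ 0 ≤ μ r.1 + μ r.2)) \ exc).card ≤ p^2 + 2*p) ∧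
    (n = 2*p+2 → (((univ ×ˢ univ).filter
        (fun r : Fin n × Fin n => r.1 ≤ r.2 ∧ 0 ≤ μ r.1 + μ r.2)) \ exc).card
        ≤ p^2 + 3*p + 2) := by
  classical
  set Pos := univ.filter (fun a : Fin n => 0 < μ a) with hPos
  set Neg := univ.filter (fun a : Fin n => μ a < 0) with hNeg
  set Zero := univ.filter (fun a : Fin n => μ a = 0) with hZero
  set PV := Pos.image μ with hPV
  have htri : Pos.card + Neg.card + Zero.card = n := trichotomy_card μ
  have hne : Neg.card = Pos.card := neg_card_eq_pos_card μ hsymm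
  have hpvq : PV.card ≤ Pos.card := Finset.card_image_le
  have hppv : p ≤ PV.card := by
    have h1 := Finset.pred_card_le_card_erase
      (s := univ.image (fun a : Fin n => (μ a)^2)) (a := 0)
    have h2 : ((univ.image (fun a : Fin n => (μ a)^2)).erase 0).card ≤ PV.card :=
      sq_card_le_pv_card μ hsymm
    omega
  have hstruct : (n = 2*p+1 ∧ Pos.card = p ∧ Zero.card = 1) ∨
      (n = 2*p+2 ∧ Pos.card = p+1 ∧ Zero.card = 0) ∨
      (n = 2*p+2 ∧ Pos.card = p ∧ Zero.card = 2) := by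
    rcases hnp with h | h
    · left; omega
    · right
      by_cases hz : Zero.card = 0
      · left; omega
      · right
        refine ⟨h, by omega, by omega⟩
  have hpv_eq : PV.card = Pos.card := by
    rcases hstruct with ⟨_, hq, hz⟩ | ⟨_, hq, hz⟩ | ⟨_, hq, hz⟩
    · omega
    · -- z = 0 case : 0 is not a square value
      have h0 : (0:ℝ) ∉ univ.image (fun a : Fin n => (μ a)^2) := by
        intro h
        simp only [mem_image, mem_univ, true_and] at h
        obtain ⟨a, ha⟩ := h
        have : μ a = 0 := by nlinarith [sq_nonneg (μ a)]
        have : a ∈ Zero := by simp [hZero, this]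
        rw [Finset.card_eq_zero] at hz
        rw [hz] at this
        exact absurd this (Finset.notMem_empty a)
      have herase : (univ.image (fun a : Fin n => (μ a)^2)).erase 0
          = univ.image (fun a : Fin n => (μ a)^2) := Finset.erase_eq_of_notMem h0
      have h2 : ((univ.image (fun a : Fin n => (μ a)^2)).erase 0).card ≤ PV.card :=
        sq_card_le_pv_card μ hsymm
      rw [herase] at h2
      omega
    · omega
  have hinjPos : Set.InjOn μ Pos := Finset.card_image_iff.mp hpv_eq
  have hinjNeg : Set.InjOn μ Neg := by
    apply Finset.card_image_iff.mp
    have h1 : Neg.image μ = PV.image (fun v => -v) := nv_eq_neg_pv μ hsymm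
    rw [h1, Finset.card_image_of_injective _ neg_injective, hpv_eq, hne]
  have hnegval : ∀ a, μ a < 0 → -μ a ∈ PV := by
    intro a ha
    have h1 : μ a ∈ Neg.image μ := Finset.mem_image_of_mem μ (by simp [hNeg, ha])
    rw [nv_eq_neg_pv μ hsymm] at h1
    rw [Finset.mem_image] at h1
    obtain ⟨v, hv, hva⟩ := h1
    rw [show -μ a = v by linarith]
    exact hv
  set S := ((univ ×ˢ univ).filter
      (fun r : Fin n × Fin n => r.1 ≤ r.2 ∧ 0 ≤ μ r.1 + μ r.2)) \ exc with hS
  -- basic facts about members of S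
  have hSmem : ∀ r ∈ S, r.1 ≤ r.2 ∧ 0 ≤ μ r.1 + μ r.2 ∧ r ∉ exc := by
    intro r hr
    simp only [hS, Finset.mem_sdiff, mem_filter, Finset.mem_product] at hr
    exact ⟨hr.1.2.1, hr.1.2.2, hr.2⟩
  -- the four pieces
  set c1 : Fin n × Fin n → Prop := fun r => 0 < μ r.1 ∧ 0 < μ r.2 with hc1
  set c2 : Fin n × Fin n → Prop := fun r => (0 < μ r.1 ∧ μ r.2 = 0) ∨ (μ r.1 = 0 ∧ 0 < μ r.2)
    with hc2
  set c3 : Fin n × Fin n → Prop := fun r => (0 < μ r.1 ∧ μ r.2 < 0) ∨ (μ r.1 < 0 ∧ 0 < μ r.2)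
    with hc3
  set c4 : Fin n × Fin n → Prop := fun r => μ r.1 = 0 ∧ μ r.2 = 0 with hc4
  have hcover : S ⊆ ((S.filter c1 ∪ S.filter c2) ∪ (S.filter c3 ∪ S.filter c4)) := by
    intro r hr
    obtain ⟨h1, h2, h3⟩ := hSmem r hr
    simp only [Finset.mem_union, mem_filter, hc1, hc2, hc3, hc4]
    rcases lt_trichotomy (μ r.1) 0 with ha | ha | ha <;>
      rcases lt_trichotomy (μ r.2) 0 with hb | hb | hb
    · exact absurd h2 (by push_neg; linarith)
    · exact absurd h2 (by push_neg; linarith)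
    · exact Or.inr (Or.inl ⟨hr, Or.inr ⟨ha, hb⟩⟩)
    · exact absurd h2 (by push_neg; linarith)
    · exact Or.inr (Or.inr ⟨hr, ha, hb⟩)
    · exact Or.inl (Or.inr ⟨hr, Or.inr ⟨ha, hb⟩⟩)
    · exact Or.inr (Or.inl ⟨hr, Or.inl ⟨ha, hb⟩⟩)
    · exact Or.inl (Or.inr ⟨hr, Or.inl ⟨ha, hb⟩⟩)
    · exact Or.inl (Or.inl ⟨hr, ha, hb⟩)
  have hcard_cover : S.card ≤ (S.filter c1).card + (S.filter c2).card
      + (S.filter c3).card + (S.filter c4).card := by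
    calc S.card ≤ ((S.filter c1 ∪ S.filter c2) ∪ (S.filter c3 ∪ S.filter c4)).card :=
          Finset.card_le_card hcover
    _ ≤ (S.filter c1 ∪ S.filter c2).card + (S.filter c3 ∪ S.filter c4).card :=
          Finset.card_union_le _ _
    _ ≤ ((S.filter c1).card + (S.filter c2).card)
          + ((S.filter c3).card + (S.filter c4).card) :=
          Nat.add_le_add (Finset.card_union_le _ _) (Finset.card_union_le _ _)
    _ = _ := by ring
  -- Bound 1
  have hb1 : 2 * (S.filter c1).card ≤ Pos.card * (Pos.card + 1) := by
    have hsub : S.filter c1 ⊆ (Pos ×ˢ Pos).filter (fun r => r.1 ≤ r.2) := by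
      intro r hr
      rw [Finset.mem_filter] at hr
      obtain ⟨hrS, hc⟩ := hr
      obtain ⟨h1, _, _⟩ := hSmem r hrS
      simp only [hc1] at hc
      simp only [Finset.mem_filter, Finset.mem_product, hPos, mem_filter, mem_univ, true_and]
      exact ⟨⟨hc.1, hc.2⟩, h1⟩
    calc 2 * (S.filter c1).card ≤ 2 * ((Pos ×ˢ Pos).filter (fun r => r.1 ≤ r.2)).card :=
          Nat.mul_le_mul_left 2 (Finset.card_le_card hsub)
    _ = Pos.card * (Pos.card + 1) := tri_card Pos
  -- Bound 2
  have hb2 : (S.filter c2).card ≤ Pos.card * Zero.card := by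
    rw [← Finset.card_product]
    apply Finset.card_le_card_of_injOn (fun r => if 0 < μ r.1 then r else r.swap)
    · intro r hr
      rw [Finset.mem_coe, Finset.mem_filter] at hr
      beta_reduce; rw [Finset.mem_coe]
      obtain ⟨hrS, hc⟩ := hr
      simp only [hc2] at hc
      rcases hc with ⟨h1, h2⟩ | ⟨h1, h2⟩
      · rw [if_pos h1]
        simp only [Finset.mem_product, hPos, hZero, mem_filter, mem_univ, true_and]
        exact ⟨h1, h2⟩
      · rw [if_neg (by rw [h1]; exact lt_irrefl 0)]
        simp only [Finset.mem_product, hPos, hZero, mem_filter, mem_univ, true_and, Prod.fst_swap,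
          Prod.snd_swap]
        exact ⟨h2, h1⟩
    · intro r hr r' hr' heq
      dsimp only at heq
      simp only [Finset.mem_coe, Finset.mem_filter] at hr hr'
      obtain ⟨hrS, _⟩ := hr
      obtain ⟨hr'S, _⟩ := hr'
      obtain ⟨hle, _, _⟩ := hSmem r hrS
      obtain ⟨hle', _, _⟩ := hSmem r' hr'S
      by_cases h1 : 0 < μ r.1 <;> by_cases h1' : 0 < μ r'.1
      · rw [if_pos h1, if_pos h1'] at heq; exact heq
      · rw [if_pos h1, if_neg h1'] at heq
        have e1 : r.1 = r'.2 := congrArg Prod.fst heq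
        have e2 : r.2 = r'.1 := congrArg Prod.snd heq
        have h3 : r.1 = r.2 := le_antisymm hle (by rw [e2, e1]; exact hle')
        refine Prod.ext ?_ ?_
        · rw [h3]; exact e2
        · rw [← h3]; exact e1
      · rw [if_neg h1, if_pos h1'] at heq
        have e1 : r.2 = r'.1 := congrArg Prod.fst heq
        have e2 : r.1 = r'.2 := congrArg Prod.snd heq
        have h3 : r.1 = r.2 := le_antisymm hle (by rw [e2, e1]; exact hle')
        refine Prod.ext ?_ ?_
        · rw [h3]; exact e1
        · rw [← h3]; exact e2
      · rw [if_neg h1, if_neg h1'] at heq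
        exact Prod.swap_injective heq
  -- Bound 3
  have hb3 : 2 * (S.filter c3).card ≤ PV.card * (PV.card + 1) := by
    rw [← tri_card PV]
    apply Nat.mul_le_mul_left
    apply Finset.card_le_card_of_injOn
      (fun r => if 0 < μ r.1 then ((-μ r.2, μ r.1) : ℝ × ℝ) else (-μ r.1, μ r.2))
    · intro r hr
      rw [Finset.mem_coe, Finset.mem_filter] at hr
      beta_reduce; rw [Finset.mem_coe]
      obtain ⟨hrS, hc⟩ := hr
      obtain ⟨hle, hsum, _⟩ := hSmem r hrS
      simp only [hc3] at hc
      rcases hc with ⟨h1, h2⟩ | ⟨h1, h2⟩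
      · rw [if_pos h1]
        simp only [Finset.mem_filter, Finset.mem_product]
        exact ⟨⟨hnegval r.2 h2, Finset.mem_image_of_mem μ (by simp [hPos, h1])⟩, by
          linarith⟩
      · rw [if_neg (by push_neg; linarith)]
        simp only [Finset.mem_filter, Finset.mem_product]
        exact ⟨⟨hnegval r.1 h1, Finset.mem_image_of_mem μ (by simp [hPos, h2])⟩, by
          linarith⟩
    · intro r hr r' hr' heq
      dsimp only at heq
      simp only [Finset.mem_coe, Finset.mem_filter] at hr hr'
      obtain ⟨hrS, hc⟩ := hr
      obtain ⟨hr'S, hc'⟩ := hr'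
      obtain ⟨hle, hsum, _⟩ := hSmem r hrS
      obtain ⟨hle', hsum', _⟩ := hSmem r' hr'S
      simp only [hc3] at hc hc'
      have memP : ∀ b : Fin n, 0 < μ b → b ∈ Pos := by
        intro b hb; simp [hPos, hb]
      have memN : ∀ b : Fin n, μ b < 0 → b ∈ Neg := by
        intro b hb; simp [hNeg, hb]
      by_cases h1 : 0 < μ r.1 <;> by_cases h1' : 0 < μ r'.1
      · have h2 : μ r.2 < 0 := by rcases hc with ⟨_, h⟩ | ⟨h, _⟩; exact h; linarith
        have h2' : μ r'.2 < 0 := by rcases hc' with ⟨_, h⟩ | ⟨h, _⟩; exact h; linarith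
        rw [if_pos h1, if_pos h1'] at heq
        have e1 : μ r.1 = μ r'.1 := congrArg Prod.snd heq
        have e2 : μ r.2 = μ r'.2 := by
          have := congrArg Prod.fst heq; simp only at this; linarith
        exact Prod.ext (hinjPos (memP r.1 h1) (memP r'.1 h1') e1)
          (hinjNeg (memN r.2 h2) (memN r'.2 h2') e2)
      · have h2 : μ r.2 < 0 := by rcases hc with ⟨_, h⟩ | ⟨h, _⟩; exact h; linarith
        have hn1' : μ r'.1 < 0 := by rcases hc' with ⟨h, _⟩ | ⟨h, _⟩; exact absurd h h1'; exact h
        have hp2' : 0 < μ r'.2 := by rcases hc' with ⟨h, _⟩ | ⟨_, h⟩; exact absurd h h1'; exact h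
        rw [if_pos h1, if_neg h1'] at heq
        have e1 : μ r.1 = μ r'.2 := congrArg Prod.snd heq
        have e2 : μ r.2 = μ r'.1 := by
          have := congrArg Prod.fst heq; simp only at this; linarith
        have i1 : r.1 = r'.2 := hinjPos (memP r.1 h1) (memP r'.2 hp2') e1
        have i2 : r.2 = r'.1 := hinjNeg (memN r.2 h2) (memN r'.1 hn1') e2
        have h3 : r.1 = r.2 := le_antisymm hle (by rw [i2, i1]; exact hle')
        rw [h3] at h1; linarith
      · have h2' : μ r'.2 < 0 := by rcases hc' with ⟨_, h⟩ | ⟨h, _⟩; exact h; linarith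
        have hn1 : μ r.1 < 0 := by rcases hc with ⟨h, _⟩ | ⟨h, _⟩; exact absurd h h1; exact h
        have hp2 : 0 < μ r.2 := by rcases hc with ⟨h, _⟩ | ⟨_, h⟩; exact absurd h h1; exact h
        rw [if_neg h1, if_pos h1'] at heq
        have e1 : μ r.2 = μ r'.1 := congrArg Prod.snd heq
        have e2 : μ r.1 = μ r'.2 := by
          have := congrArg Prod.fst heq; simp only at this; linarith
        have i1 : r.2 = r'.1 := hinjPos (memP r.2 hp2) (memP r'.1 h1') e1
        have i2 : r.1 = r'.2 := hinjNeg (memN r.1 hn1) (memN r'.2 h2') e2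
        have h3 : r.1 = r.2 := le_antisymm hle (by rw [i1, i2]; exact hle')
        rw [h3] at hn1; linarith
      · have hn1 : μ r.1 < 0 := by rcases hc with ⟨h, _⟩ | ⟨h, _⟩; exact absurd h h1; exact h
        have hp2 : 0 < μ r.2 := by rcases hc with ⟨h, _⟩ | ⟨_, h⟩; exact absurd h h1; exact h
        have hn1' : μ r'.1 < 0 := by rcases hc' with ⟨h, _⟩ | ⟨h, _⟩; exact absurd h h1'; exact h
        have hp2' : 0 < μ r'.2 := by rcases hc' with ⟨h, _⟩ | ⟨_, h⟩; exact absurd h h1'; exact h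
        rw [if_neg h1, if_neg h1'] at heq
        have e1 : μ r.2 = μ r'.2 := congrArg Prod.snd heq
        have e2 : μ r.1 = μ r'.1 := by
          have := congrArg Prod.fst heq; simp only at this; linarith
        exact Prod.ext (hinjNeg (memN r.1 hn1) (memN r'.1 hn1') e2)
          (hinjPos (memP r.2 hp2) (memP r'.2 hp2') e1)
  -- Bound 4
  have hb4 : (S.filter c4).card + exc.card
      ≤ ((Zero ×ˢ Zero).filter (fun r : Fin n × Fin n => r.1 ≤ r.2)).card := by
    have hexcsub : exc ⊆ (Zero ×ˢ Zero).filter (fun r : Fin n × Fin n => r.1 ≤ r.2) := by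
      intro r hr
      obtain ⟨h1, h2⟩ := hexc r hr
      simp only [Finset.mem_filter, Finset.mem_product, hZero, mem_filter, mem_univ, true_and]
      exact ⟨⟨h2, by rw [← h1]; exact h2⟩, le_of_eq h1⟩
    have hsub : S.filter c4 ⊆ ((Zero ×ˢ Zero).filter (fun r : Fin n × Fin n => r.1 ≤ r.2)) \ exc := by
      intro r hr
      rw [Finset.mem_filter] at hr
      obtain ⟨hrS, hc⟩ := hr
      obtain ⟨hle, _, hnex⟩ := hSmem r hrS
      simp only [hc4] at hc
      rw [Finset.mem_sdiff]
      refine ⟨?_, hnex⟩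
      simp only [Finset.mem_filter, Finset.mem_product, hZero, mem_filter, mem_univ, true_and]
      exact ⟨⟨hc.1, hc.2⟩, hle⟩
    have hh := Finset.card_le_card hsub
    have h2 := Finset.card_sdiff_add_card_eq_card hexcsub
    omega
  have hzz : 2 * ((Zero ×ˢ Zero).filter (fun r : Fin n × Fin n => r.1 ≤ r.2)).card
      = Zero.card * (Zero.card + 1) := tri_card Zero
  have hexc1 : 1 ≤ Zero.card → exc.card = 1 := by
    intro hz
    apply hexc_card
    obtain ⟨a, ha⟩ := Finset.card_pos.mp hz
    simp only [hZero, mem_filter] at ha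
    exact ⟨a, ha.2⟩
  constructor
  · intro hodd
    rcases hstruct with ⟨_, hq, hz⟩ | ⟨he, _, _⟩ | ⟨he, _, _⟩
    · have he1 : exc.card = 1 := hexc1 (by omega)
      rw [hq] at hb1
      rw [hq, hz] at hb2
      rw [hpv_eq, hq] at hb3
      rw [hz] at hzz
      rw [he1] at hb4
      have e : p*(p+1) = p^2+p := by ring
      rw [e] at hb1 hb3
      have hgoal : 2 * S.card ≤ 2*(p^2+2*p) := by
        generalize p^2 = P at hb1 hb3 ⊢
        omega
      omega
    · omega
    · omega
  · intro heven
    rcases hstruct with ⟨ho, _, _⟩ | ⟨_, hq, hz⟩ | ⟨_, hq, hz⟩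
    · omega
    · rw [hq] at hb1
      rw [hq, hz] at hb2
      rw [hpv_eq, hq] at hb3
      rw [hz] at hzz
      have e : (p+1)*((p+1)+1) = p^2+3*p+2 := by ring
      rw [e] at hb1 hb3
      have hgoal : 2 * S.card ≤ 2*(p^2+3*p+2) := by
        generalize p^2 = P at hb1 hb3 ⊢
        omega
      omega
    · have he1 : exc.card = 1 := hexc1 (by omega)
      rw [hq] at hb1
      rw [hq, hz] at hb2
      rw [hpv_eq, hq] at hb3
      rw [hz] at hzz
      rw [he1] at hb4
      have e : p*(p+1) = p^2+p := by ring
      rw [e] at hb1 hb3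
      have hgoal : 2 * S.card ≤ 2*(p^2+3*p+2) := by
        generalize p^2 = P at hb1 hb3 ⊢
        omega
      omega

end Counting

lemma core_dim_bound {n : ℕ} (μ : Fin n → ℝ) (Q' : Submodule ℝ (Matrix (Fin n) (Fin n) ℝ))
    (hsym : ∀ B ∈ Q', Bᵀ = B)
    (htr : ∀ B ∈ Q', Matrix.trace B = 0)
    (hq : ∀ B ∈ Q', Matrix.trace (Matrix.diagonal μ * B * B) = 0)
    (exc : Finset (Fin n × Fin n))
    (hexc : ∀ r ∈ exc, r.1 = r.2 ∧ μ r.1 = 0)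
    (hexc_card : exc.card ≤ 1) :
    Module.finrank ℝ Q' ≤ (((univ ×ˢ univ).filter
      (fun r : Fin n × Fin n => r.1 ≤ r.2 ∧ 0 ≤ μ r.1 + μ r.2)) \ exc).card := by
  classical
  set S := ((univ ×ˢ univ).filter
      (fun r : Fin n × Fin n => r.1 ≤ r.2 ∧ 0 ≤ μ r.1 + μ r.2)) \ exc with hS
  -- evaluation linear map
  let E : Matrix (Fin n) (Fin n) ℝ →ₗ[ℝ] (↥S → ℝ) :=
    { toFun := fun B s => B s.1.1 s.1.2
      map_add' := by intros; funext s; simp [Matrix.add_apply]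
      map_smul' := by intros; funext s; simp [Matrix.smul_apply] }
  let L : Q' →ₗ[ℝ] (↥S → ℝ) := E.comp Q'.subtype
  have hinj : Function.Injective L := by
    rw [← LinearMap.ker_eq_bot, LinearMap.ker_eq_bot']
    intro B hB0
    set M : Matrix (Fin n) (Fin n) ℝ := (B : Matrix (Fin n) (Fin n) ℝ) with hM
    have hBQ : M ∈ Q' := B.2
    have hcoord : ∀ r : Fin n × Fin n, r ∈ S → M r.1 r.2 = 0 := by
      intro r hr
      exact congrFun hB0 ⟨r, hr⟩
    have hsymM : ∀ a b, M b a = M a b := by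
      intro a b
      conv_lhs => rw [← hsym M hBQ]
      rfl
    -- step a : positive-sum entries vanish
    have hstepa : ∀ a b : Fin n, 0 < μ a + μ b → M a b = 0 := by
      have key : ∀ a b : Fin n, a ≤ b → 0 < μ a + μ b → M a b = 0 := by
        intro a b hab hpos
        apply hcoord (a, b)
        rw [hS, Finset.mem_sdiff]
        constructor
        · simp only [Finset.mem_filter, Finset.mem_product, mem_univ, true_and]
          exact ⟨hab, le_of_lt hpos⟩
        · intro hin
          obtain ⟨h1, h2⟩ := hexc (a, b) hin
          simp only at h1 h2
          rw [← h1, h2] at hpos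
          simp at hpos
      intro a b hpos
      rcases le_total a b with h | h
      · exact key a b h hpos
      · rw [← hsymM]
        exact key b a h (by linarith)
    -- expand the trace
    have hexpand : Matrix.trace (Matrix.diagonal μ * M * M)
        = ∑ a, ∑ b, μ a * (M a b)^2 := by
      rw [Matrix.trace]
      refine Finset.sum_congr rfl ?_
      intro a _
      rw [Matrix.diag]
      rw [Matrix.mul_apply]
      refine Finset.sum_congr rfl ?_
      intro b _
      rw [Matrix.diagonal_mul]
      rw [hsymM a b]
      ring
    have htrace0 : ∑ a, ∑ b, μ a * (M a b)^2 = 0 := by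
      rw [← hexpand]; exact hq M hBQ
    have htrace0' : ∑ a, ∑ b, μ b * (M a b)^2 = 0 := by
      rw [Finset.sum_comm]
      have : ∑ b, ∑ a, μ b * (M a b)^2 = ∑ b, ∑ a, μ b * (M b a)^2 := by
        refine Finset.sum_congr rfl ?_
        intro b _
        refine Finset.sum_congr rfl ?_
        intro a _
        rw [hsymM b a]
      rw [this]
      exact htrace0
    have hsum0 : ∑ r ∈ univ ×ˢ univ, (μ r.1 + μ r.2) * (M r.1 r.2)^2 = 0 := by
      rw [Finset.sum_product]
      have : ∀ a ∈ (univ : Finset (Fin n)), ∑ b, (μ a + μ b) * (M a b)^2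
          = (∑ b, μ a * (M a b)^2) + ∑ b, μ b * (M a b)^2 := by
        intro a _
        rw [← Finset.sum_add_distrib]
        refine Finset.sum_congr rfl ?_
        intro b _
        ring
      rw [Finset.sum_congr rfl this, Finset.sum_add_distrib, htrace0, htrace0']
      simp
    have hterm : ∀ r ∈ univ ×ˢ univ, (μ r.1 + μ r.2) * (M r.1 r.2)^2 ≤ 0 := by
      intro r _
      rcases lt_or_ge 0 (μ r.1 + μ r.2) with h | h
      · rw [hstepa r.1 r.2 h]
        simp
      · exact mul_nonpos_of_nonpos_of_nonneg h (sq_nonneg _)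
    have hall0 := (Finset.sum_eq_zero_iff_of_nonpos hterm).mp hsum0
    -- step c : all entries with nonzero sum vanish
    have hstepc : ∀ a b : Fin n, μ a + μ b ≠ 0 → M a b = 0 := by
      intro a b hne
      have := hall0 (a, b) (by simp)
      simp only at this
      rcases mul_eq_zero.mp this with h | h
      · exact absurd h hne
      · exact pow_eq_zero_iff (by norm_num) |>.mp h
    -- entries in S vanish, handle exceptional diagonal entry via trace
    have hdiag_exc : ∀ a : Fin n, M a a = 0 := by
      rcases Finset.eq_empty_or_nonempty exc with hemp | ⟨r₀, hr₀⟩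
      · intro a
        rcases eq_or_ne (μ a) 0 with hz | hz
        · apply hcoord (a, a)
          rw [hS, Finset.mem_sdiff, hemp]
          refine ⟨?_, Finset.notMem_empty _⟩
          simp only [Finset.mem_filter, Finset.mem_product, mem_univ, true_and]
          exact ⟨le_refl a, by rw [hz]; norm_num⟩
        · exact hstepc a a (by intro h; apply hz; linarith)
      · obtain ⟨h1, h2⟩ := hexc r₀ hr₀
        have hexc_eq : exc = {r₀} := by
          apply Finset.eq_singleton_iff_unique_mem.mpr
          refine ⟨hr₀, ?_⟩
          intro x hx
          by_contra hne
          have : 2 ≤ exc.card := Finset.one_lt_card.mpr ⟨x, hx, r₀, hr₀, hne⟩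
          omega
        have hnot_exc : ∀ a : Fin n, (a, a) ≠ r₀ → M a a = 0 := by
          intro a hne
          rcases eq_or_ne (μ a) 0 with hz | hz
          · apply hcoord (a, a)
            rw [hS, Finset.mem_sdiff, hexc_eq]
            refine ⟨?_, by simp [hne]⟩
            simp only [Finset.mem_filter, Finset.mem_product, mem_univ, true_and]
            exact ⟨le_refl a, by rw [hz]; norm_num⟩
          · exact hstepc a a (by intro h; apply hz; linarith)
        -- trace argument for the entry r₀
        have htr0 : Matrix.trace M = 0 := htr M hBQ
        have : Matrix.trace M = M r₀.1 r₀.1 := by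
          rw [Matrix.trace]
          rw [Finset.sum_eq_single r₀.1]
          · rfl
          · intro a _ hne
            apply hnot_exc
            intro h
            apply hne
            exact congrArg Prod.fst h
          · intro h
            exact absurd (Finset.mem_univ _) h
        intro a
        rcases eq_or_ne ((a, a) : Fin n × Fin n) r₀ with he | hne
        · have : M r₀.1 r₀.1 = 0 := by rw [← htr0, this]
          rw [show a = r₀.1 from congrArg Prod.fst he]
          exact this
        · exact hnot_exc a hne
    -- conclude M = 0
    have hMzero : M = 0 := by
      ext a b
      rcases eq_or_ne a b with rfl | hne
      · exact hdiag_exc a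
      · have key : ∀ a b : Fin n, a ≤ b → a ≠ b → M a b = 0 := by
          intro a b hab hne
          rcases eq_or_ne (μ a + μ b) 0 with hz | hz
          · apply hcoord (a, b)
            rw [hS, Finset.mem_sdiff]
            constructor
            · simp only [Finset.mem_filter, Finset.mem_product, mem_univ, true_and]
              exact ⟨hab, le_of_eq hz.symm⟩
            · intro hin
              exact hne (hexc (a, b) hin).1
          · exact hstepc a b hz
        rcases le_total a b with h | h
        · exact key a b h hne
        · rw [← hsymM]
          exact key b a h (Ne.symm hne)
    exact Subtype.ext hMzero
  calc Module.finrank ℝ Q' ≤ Module.finrank ℝ (↥S → ℝ) :=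
        LinearMap.finrank_le_finrank_of_injective hinj
  _ = S.card := by
      rw [Module.finrank_pi]
      exact Fintype.card_coe S

lemma trace_cubic {n : ℕ} (Q : Submodule ℝ (Matrix (Fin n) (Fin n) ℝ))
    (h3 : ∀ X ∈ Q, Matrix.trace (X*X*X) = 0)
    {A B : Matrix (Fin n) (Fin n) ℝ} (hA : A ∈ Q) (hB : B ∈ Q) :
    Matrix.trace (A*B*B) = 0 := by
  have e1 := h3 (A+B) (Q.add_mem hA hB)
  have e2 := h3 (A-B) (Q.sub_mem hA hB)
  have eA := h3 A hA
  have eB := h3 B hB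
  have hexp : (A+B)*(A+B)*(A+B)
      = A*A*A + (A*A*B + A*B*A + B*A*A) + (A*B*B + B*A*B + B*B*A) + B*B*B := by
    noncomm_ring
  have hexp2 : (A-B)*(A-B)*(A-B)
      = A*A*A - (A*A*B + A*B*A + B*A*A) + (A*B*B + B*A*B + B*B*A) - B*B*B := by
    noncomm_ring
  rw [hexp] at e1
  rw [hexp2] at e2
  simp only [Matrix.trace_add, Matrix.trace_sub] at e1 e2
  have c1 : Matrix.trace (B*A*B) = Matrix.trace (B*B*A) := Matrix.trace_mul_cycle B A B
  have c2 : Matrix.trace (B*B*A) = Matrix.trace (A*B*B) := Matrix.trace_mul_cycle B B A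
  linarith

/-- dimension bound for austere subspaces meeting `B_{n,ℝ}`. -/
theorem austere_subspace_dim_bound (n : ℕ) (hn : 3 ≤ n) (p : ℕ) (hp : p = (n - 1) / 2)
    (Q : Submodule ℝ (Matrix (Fin n) (Fin n) ℝ))
    (hsym : ∀ A ∈ Q, Aᵀ = A)
    (haust : ∀ A ∈ Q, ∀ k ≤ p, Matrix.trace (A ^ (2 * k + 1)) = 0)
    (hmeet : ∃ A ∈ Q, Matrix.trace (A ^ 2) = 1 ∧
      LinearIndependent ℝ (fun α : Fin (p + 1) => A ^ (2 * (α : ℕ)))) :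
    (n = 2 * p + 1 → Module.finrank ℝ Q ≤ p ^ 2 + 2 * p) ∧
    (n = 2 * p + 2 → Module.finrank ℝ Q ≤ p ^ 2 + 3 * p + 2) := by
  classical
  obtain ⟨A, hAQ, _htr2, hli⟩ := hmeet
  have hp1 : 1 ≤ p := by omega
  have hn2 : n ≤ 2*p+2 := by omega
  have hnp : n = 2*p+1 ∨ n = 2*p+2 := by omega
  have hstar : ∀ M : Matrix (Fin n) (Fin n) ℝ, star M = Mᵀ := by
    intro M; ext i j; simp [Matrix.star_apply]
  have hAH : A.IsHermitian := by
    have h1 : Aᴴ = Aᵀ := by ext i j; simp [Matrix.conjTranspose_apply]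
    rw [Matrix.IsHermitian, h1]
    exact hsym A hAQ
  set U : Matrix (Fin n) (Fin n) ℝ := ↑(Matrix.IsHermitian.eigenvectorUnitary hAH) with hUdef
  have hU1 : star U * U = 1 :=
    Matrix.mem_unitaryGroup_iff'.mp (Matrix.IsHermitian.eigenvectorUnitary hAH).2
  have hU2 : U * star U = 1 :=
    Matrix.mem_unitaryGroup_iff.mp (Matrix.IsHermitian.eigenvectorUnitary hAH).2
  set μ : Fin n → ℝ := hAH.eigenvalues with hμdef
  have hdiag : star U * A * U = Matrix.diagonal μ := by
    have h := hAH.conjStarAlgAut_star_eigenvectorUnitary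
    simp only [Unitary.conjStarAlgAut_star_apply, Unitary.coe_star] at h
    rw [hUdef, h, RCLike.ofReal_real_eq_id]
    rfl
  -- conjugation equivalence
  set f : Matrix (Fin n) (Fin n) ℝ →ₗ[ℝ] Matrix (Fin n) (Fin n) ℝ :=
    { toFun := fun B => star U * B * U
      map_add' := by intros; noncomm_ring
      map_smul' := by intros; simp [Matrix.mul_smul, Matrix.smul_mul] } with hfdef
  set g : Matrix (Fin n) (Fin n) ℝ →ₗ[ℝ] Matrix (Fin n) (Fin n) ℝ :=
    { toFun := fun B => U * B * star U
      map_add' := by intros; noncomm_ring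
      map_smul' := by intros; simp [Matrix.mul_smul, Matrix.smul_mul] } with hgdef
  have hfg : f.comp g = LinearMap.id := by
    apply LinearMap.ext
    intro B
    show star U * (U * B * star U) * U = B
    rw [show star U * (U * B * star U) * U = (star U * U) * B * (star U * U) by noncomm_ring,
      hU1, one_mul, mul_one]
  have hgf : g.comp f = LinearMap.id := by
    apply LinearMap.ext
    intro B
    show U * (star U * B * U) * star U = B
    rw [show U * (star U * B * U) * star U = (U * star U) * B * (U * star U) by noncomm_ring,
      hU2, one_mul, mul_one]
  set φ : Matrix (Fin n) (Fin n) ℝ ≃ₗ[ℝ] Matrix (Fin n) (Fin n) ℝ :=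
    LinearEquiv.ofLinear f g hfg hgf with hφdef
  set Q' : Submodule ℝ (Matrix (Fin n) (Fin n) ℝ) := Q.map (φ : _ →ₗ[ℝ] _) with hQ'def
  have hrank : Module.finrank ℝ Q' = Module.finrank ℝ Q := LinearEquiv.finrank_map_eq φ Q
  have hφ_apply : ∀ B, φ B = star U * B * U := fun B => rfl
  have hmem : ∀ B', B' ∈ Q' ↔ ∃ B ∈ Q, star U * B * U = B' := by
    intro B'
    rw [hQ'def, Submodule.mem_map]
    rfl
  have key : ∀ B C : Matrix (Fin n) (Fin n) ℝ,
      (star U * B * U) * (star U * C * U) = star U * (B*C) * U := by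
    intro B C
    calc (star U * B * U) * (star U * C * U)
        = star U * B * (U * star U) * C * U := by noncomm_ring
    _ = star U * (B*C) * U := by rw [hU2]; noncomm_ring
  have hpow : ∀ (B : Matrix (Fin n) (Fin n) ℝ) (k : ℕ),
      star U * (B^k) * U = (star U * B * U)^k := by
    intro B k
    induction k with
    | zero => rw [pow_zero, pow_zero, mul_one]; exact hU1
    | succ k ih => rw [pow_succ, pow_succ, ← ih, key]
  have htrconj : ∀ B : Matrix (Fin n) (Fin n) ℝ,
      Matrix.trace (star U * B * U) = Matrix.trace B := by
    intro B
    rw [Matrix.trace_mul_cycle, hU2, one_mul]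
  -- transferred properties
  have hsym' : ∀ B' ∈ Q', B'ᵀ = B' := by
    intro B' hB'
    obtain ⟨B, hB, rfl⟩ := (hmem B').mp hB'
    rw [hstar U]
    rw [Matrix.transpose_mul, Matrix.transpose_mul, Matrix.transpose_transpose,
      hsym B hB, ← mul_assoc]
  have htr' : ∀ B' ∈ Q', Matrix.trace B' = 0 := by
    intro B' hB'
    obtain ⟨B, hB, rfl⟩ := (hmem B').mp hB'
    rw [htrconj]
    have := haust B hB 0 (by omega)
    rwa [show 2*0+1 = 1 by rfl, pow_one] at this
  have h3 : ∀ X ∈ Q, Matrix.trace (X*X*X) = 0 := by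
    intro X hX
    have := haust X hX 1 hp1
    rwa [show 2*1+1 = 3 by rfl, pow_succ, pow_succ, pow_one] at this
  have hq' : ∀ B' ∈ Q', Matrix.trace (Matrix.diagonal μ * B' * B') = 0 := by
    intro B' hB'
    obtain ⟨B, hB, rfl⟩ := (hmem B').mp hB'
    rw [← hdiag, key, key, htrconj]
    exact trace_cubic Q h3 hAQ hB
  -- power sums of μ vanish
  have hps : ∀ k ≤ p, ∑ a, μ a ^ (2*k+1) = 0 := by
    intro k hk
    have h1 : Matrix.trace ((Matrix.diagonal μ)^(2*k+1)) = ∑ a, μ a ^ (2*k+1) := by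
      rw [Matrix.diagonal_pow, Matrix.trace_diagonal]
      rfl
    rw [← h1, ← hdiag, ← hpow, htrconj]
    exact haust A hAQ k hk
  -- symmetric counts
  have hsymm : ∀ v : ℝ, (univ.filter (fun a => μ a = v)).card
      = (univ.filter (fun a => μ a = -v)).card := count_symm hn2 μ hps
  -- the squares take at least p+1 values
  have hsq : p + 1 ≤ (univ.image (fun a : Fin n => (μ a)^2)).card := by
    have hli2 : LinearIndependent ℝ (fun α : Fin (p+1) =>
        (Matrix.diagonal μ) ^ (2 * (α : ℕ))) := by
      have hker : LinearMap.ker (φ : Matrix (Fin n) (Fin n) ℝ →ₗ[ℝ] Matrix (Fin n) (Fin n) ℝ) = ⊥ :=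
        LinearEquiv.ker φ
      have h1 := hli.map' (φ : Matrix (Fin n) (Fin n) ℝ →ₗ[ℝ] Matrix (Fin n) (Fin n) ℝ) hker
      have h2 : ((φ : Matrix (Fin n) (Fin n) ℝ →ₗ[ℝ] Matrix (Fin n) (Fin n) ℝ)
            ∘ fun α : Fin (p+1) => A ^ (2 * (α : ℕ)))
          = fun α : Fin (p+1) => (Matrix.diagonal μ) ^ (2 * (α : ℕ)) := by
        funext α
        show star U * (A ^ (2 * (α : ℕ))) * U = _
        rw [hpow, hdiag]
      rwa [h2] at h1
    -- reduce to functions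
    set dLM : (Fin n → ℝ) →ₗ[ℝ] Matrix (Fin n) (Fin n) ℝ :=
      { toFun := Matrix.diagonal
        map_add' := by
          intro v w
          ext i j
          by_cases h : i = j <;> simp [Matrix.diagonal_apply, h]
        map_smul' := by
          intro r v
          ext i j
          by_cases h : i = j <;> simp [Matrix.diagonal_apply, h] } with hdLM
    have hli3 : LinearIndependent ℝ (fun α : Fin (p+1) => fun a : Fin n => (μ a ^ 2) ^ (α : ℕ)) := by
      apply LinearIndependent.of_comp dLM
      have h2 : (dLM ∘ fun α : Fin (p+1) => fun a : Fin n => (μ a ^ 2) ^ (α : ℕ))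
          = fun α : Fin (p+1) => (Matrix.diagonal μ) ^ (2 * (α : ℕ)) := by
        funext α
        show Matrix.diagonal _ = _
        have hv : (fun a : Fin n => (μ a ^ 2) ^ (α : ℕ)) = μ ^ (2 * (α : ℕ)) := by
          funext a
          show (μ a ^ 2) ^ (α : ℕ) = μ a ^ (2 * (α : ℕ))
          rw [← pow_mul]
        rw [Matrix.diagonal_pow, ← hv]
      rwa [h2]
    set SQ := univ.image (fun a : Fin n => (μ a)^2) with hSQ
    set P : (↥SQ → ℝ) →ₗ[ℝ] (Fin n → ℝ) :=
      { toFun := fun h a => h ⟨μ a ^ 2, by rw [hSQ]; exact Finset.mem_image_of_mem _ (mem_univ a)⟩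
        map_add' := by intros; rfl
        map_smul' := by intros; rfl } with hP
    have hli4 : LinearIndependent ℝ (fun α : Fin (p+1) => fun s : ↥SQ => (s : ℝ) ^ (α : ℕ)) := by
      apply LinearIndependent.of_comp P
      have h2 : (P ∘ fun α : Fin (p+1) => fun s : ↥SQ => (s : ℝ) ^ (α : ℕ))
          = fun α : Fin (p+1) => fun a : Fin n => (μ a ^ 2) ^ (α : ℕ) := by
        funext α a
        rfl
      rwa [h2]
    have := hli4.fintype_card_le_finrank
    rwa [Fintype.card_fin, Module.finrank_pi, Fintype.card_coe] at this
  -- choose the exceptional set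
  obtain ⟨exc, hexc, hexc1, hexcle⟩ : ∃ exc : Finset (Fin n × Fin n),
      (∀ r ∈ exc, r.1 = r.2 ∧ μ r.1 = 0) ∧ ((∃ a, μ a = 0) → exc.card = 1) ∧ exc.card ≤ 1 := by
    by_cases hz : ∃ a, μ a = 0
    · obtain ⟨a, ha⟩ := hz
      refine ⟨{(a,a)}, ?_, fun _ => Finset.card_singleton _, by simp⟩
      intro r hr
      rw [Finset.mem_singleton] at hr
      subst hr
      exact ⟨rfl, ha⟩
    · exact ⟨∅, by simp, fun h => absurd h hz, by simp⟩
  have hcore := core_dim_bound μ Q' hsym' htr' hq' exc hexc hexcle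
  have hcount := counting_main μ hsymm hsq hnp exc hexc hexc1
  constructor
  · intro hodd
    have := hcount.1 hodd
    omega
  · intro heven
    have := hcount.2 heven
    omega
end

section
/- Let n ≥ 3, p = ⌊(n−1)/2⌋, and let A be an n×n real symmetric matrix with tr(A²) = 1 and tr(A^{2k+1}) = 0 for all 0 ≤ k ≤ p. Then the p matrices A^{2α} − (1/n)·tr(A^{2α})·I_n, for α = 1, …, p, are ℝ-linearly independent if and only if A² has exactly p+1 distinct eigenvalues (equivalently, the eigenvalues of A have the form λ₁, −λ₁, …, arranged in ± pairs together with 0 when n is odd, with the p+1 values λ₁ > λ₂ > … > λ_{p+1} ≥ 0 pairwise distinct). -/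
open Matrix Polynomial Finset


/-- Odd elementary symmetric functions vanish when odd power sums vanish. -/
lemma aux_esymm_odd (n p : ℕ) (μ : Fin n → ℝ)
    (hP : ∀ j, Odd j → j ≤ 2*p+1 → ∑ i, μ i ^ j = 0) :
    ∀ k, k ≤ 2*p+2 → Odd k → (Multiset.map μ Finset.univ.val).esymm k = 0 := by
  intro k
  induction k using Nat.strong_induction_on with
  | _ k ih =>
    intro hk hkodd
    have newton := congrArg (MvPolynomial.aeval μ)
      (MvPolynomial.mul_esymm_eq_sum (Fin n) ℝ k)
    have haevalpsum : ∀ j, MvPolynomial.aeval μ (MvPolynomial.psum (Fin n) ℝ j)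
        = ∑ i, μ i ^ j := by
      intro j
      simp [MvPolynomial.psum]
    simp only [_root_.map_mul, map_sum, map_pow, map_neg, _root_.map_one, map_natCast,
      MvPolynomial.aeval_esymm_eq_multiset_esymm, haevalpsum] at newton
    have hsum0 : ∑ a ∈ Finset.HasAntidiagonal.antidiagonal k with a.1 < k,
        (-1:ℝ) ^ a.1 * (Multiset.map μ Finset.univ.val).esymm a.1 * (∑ i, μ i ^ a.2) = 0 := by
      apply Finset.sum_eq_zero
      intro a ha
      simp only [Finset.mem_filter, Finset.HasAntidiagonal.mem_antidiagonal] at ha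
      rcases Nat.even_or_odd a.1 with he | ho
      · have hodd2 : Odd a.2 := by
          rcases hkodd with ⟨m, hm⟩; rcases he with ⟨l, hl⟩
          refine ⟨m - l, by omega⟩
        have h2 : a.2 ≤ 2*p+1 := by
          rcases hodd2 with ⟨m, hm⟩; omega
        rw [hP a.2 hodd2 h2, mul_zero]
      · rw [ih a.1 ha.2 (by omega) ho, mul_zero, zero_mul]
    rw [hsum0, mul_zero] at newton
    have hk0 : (k : ℝ) ≠ 0 := by
      have : k ≠ 0 := by rcases hkodd with ⟨m, hm⟩; omega
      exact_mod_cast this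
    exact (mul_eq_zero.mp newton).resolve_left hk0

lemma aux_multiset_symmetric (n p : ℕ) (hn : n ≤ 2*p+2) (μ : Fin n → ℝ)
    (hP : ∀ j, Odd j → j ≤ 2*p+1 → ∑ i, μ i ^ j = 0) :
    (Multiset.map μ Finset.univ.val).map (fun x => -x) = Multiset.map μ Finset.univ.val := by
  set M := Multiset.map μ Finset.univ.val with hM
  have hcard : Multiset.card M = n := by simp [hM]
  have hE0 : ∀ k, Odd k → M.esymm k = 0 := by
    intro k hk
    by_cases h : k ≤ 2*p+2
    · exact aux_esymm_odd n p μ hP k h hk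
    · have : Multiset.card M < k := by omega
      rw [Multiset.esymm, Multiset.powersetCard_eq_empty k this]
      simp
  have hE : ∀ k, (M.map (fun x => -x)).esymm k = M.esymm k := by
    intro k
    have h := Multiset.pow_smul_esymm (-1 : ℝ) k M
    have h2 : (fun x : ℝ => (-1 : ℝ) • x) = fun x : ℝ => -x := by
      funext x; simp
    rw [h2] at h
    rcases Nat.even_or_odd k with he | ho
    · rw [← h, he.neg_one_pow, one_smul]
    · rw [← h, ho.neg_one_pow, hE0 k ho]
      simp
  have hroots : ∀ s : Multiset ℝ,
      (s.map (fun r => Polynomial.X + Polynomial.C r)).prod.roots = s.map (fun x => -x) := by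
    intro s
    have h3 : (s.map (fun r => Polynomial.X + Polynomial.C r))
        = ((s.map fun x => -x).map (fun a => Polynomial.X - Polynomial.C a)) := by
      rw [Multiset.map_map]
      apply Multiset.map_congr rfl
      intro x _
      simp [sub_neg_eq_add]
    rw [h3, Polynomial.roots_multiset_prod_X_sub_C]
  have hprod : (M.map (fun r => Polynomial.X + Polynomial.C r)).prod
      = ((M.map fun x => -x).map (fun r => Polynomial.X + Polynomial.C r)).prod := by
    rw [Multiset.prod_X_add_C_eq_sum_esymm, Multiset.prod_X_add_C_eq_sum_esymm]
    simp only [Multiset.card_map]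
    exact Finset.sum_congr rfl fun j _ => by rw [hE]
  have h4 := congrArg Polynomial.roots hprod
  rw [hroots, hroots] at h4
  have h6 : Multiset.map (fun x : ℝ => -x) (Multiset.map (fun x : ℝ => -x) M) = M := by
    rw [Multiset.map_map]
    simp
  rw [h6] at h4
  exact h4

lemma aux_card_sq (n p : ℕ) (hn : n ≤ 2*p+2) (μ : Fin n → ℝ)
    (hP : ∀ j, Odd j → j ≤ 2*p+1 → ∑ i, μ i ^ j = 0) :
    2 * (Finset.image (fun i => μ i ^ 2) Finset.univ).card ≤ n + 1 := by
  classical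
  have hsym : Multiset.map (fun x : ℝ => -x) (Multiset.map μ Finset.univ.val)
      = Multiset.map μ Finset.univ.val := aux_multiset_symmetric n p hn μ hP
  have hcount : ∀ x : ℝ, (Multiset.map μ Finset.univ.val).count (-x)
      = (Multiset.map μ Finset.univ.val).count x := by
    intro x
    have h := Multiset.count_map_eq_count' (fun y : ℝ => -y) (Multiset.map μ Finset.univ.val)
      (fun a b hab => neg_injective hab) x
    rw [hsym] at h
    exact h
  have hcount2 : ∀ x : ℝ, (Multiset.map μ Finset.univ.val).count x
      = (Finset.univ.filter (fun i => μ i = x)).card := by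
    intro x
    rw [Multiset.count_map]
    rw [show (Finset.univ.filter (fun i : Fin n => μ i = x))
        = (Finset.univ.filter (fun i : Fin n => x = μ i)) from
      Finset.filter_congr (fun i _ => by simp [eq_comm])]
    rw [Finset.card_def, Finset.filter_val]
  have hcount3 : ∀ x : ℝ, (Finset.univ.filter (fun i => μ i = -x)).card
      = (Finset.univ.filter (fun i => μ i = x)).card := by
    intro x
    rw [← hcount2, ← hcount2, hcount]
  have hfib : ∀ t : ℝ, t ∈ Finset.image (fun i => μ i ^ 2) Finset.univ →
      1 ≤ (Finset.univ.filter (fun i => μ i ^ 2 = t)).card := by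
    intro t ht
    obtain ⟨i, _, hi⟩ := Finset.mem_image.mp ht
    exact Finset.card_pos.mpr ⟨i, Finset.mem_filter.mpr ⟨Finset.mem_univ i, hi⟩⟩
  have hfib2 : ∀ t : ℝ, t ∈ Finset.image (fun i => μ i ^ 2) Finset.univ → t ≠ 0 →
      2 ≤ (Finset.univ.filter (fun i => μ i ^ 2 = t)).card := by
    intro t ht ht0
    obtain ⟨i, _, hi⟩ := Finset.mem_image.mp ht
    have hx0 : μ i ≠ 0 := by
      intro h; apply ht0; rw [← hi, h]; ring
    have hA1 : Finset.univ.filter (fun j => μ j = μ i)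
        ⊆ Finset.univ.filter (fun j => μ j ^ 2 = t) := by
      intro j hj
      rw [Finset.mem_filter] at hj ⊢
      exact ⟨hj.1, by rw [hj.2, hi]⟩
    have hA2 : Finset.univ.filter (fun j => μ j = -μ i)
        ⊆ Finset.univ.filter (fun j => μ j ^ 2 = t) := by
      intro j hj
      rw [Finset.mem_filter] at hj ⊢
      refine ⟨hj.1, ?_⟩
      rw [hj.2, ← hi]; ring
    have hd : Disjoint (Finset.univ.filter (fun j => μ j = μ i))
        (Finset.univ.filter (fun j => μ j = -μ i)) := by
      rw [Finset.disjoint_filter]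
      intro j _ h1 h2
      rw [h1] at h2
      exact hx0 (by linarith)
    have hc1 : 1 ≤ (Finset.univ.filter (fun j => μ j = μ i)).card :=
      Finset.card_pos.mpr ⟨i, Finset.mem_filter.mpr ⟨Finset.mem_univ i, rfl⟩⟩
    have hc2 := hcount3 (μ i)
    calc 2 ≤ (Finset.univ.filter (fun j => μ j = μ i)).card
          + (Finset.univ.filter (fun j => μ j = -μ i)).card := by omega
      _ = ((Finset.univ.filter (fun j => μ j = μ i))
          ∪ (Finset.univ.filter (fun j => μ j = -μ i))).card :=
        (Finset.card_union_of_disjoint hd).symm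
      _ ≤ _ := Finset.card_le_card (Finset.union_subset hA1 hA2)
  have hsplit : n = ∑ t ∈ Finset.image (fun i => μ i ^ 2) Finset.univ,
      (Finset.univ.filter (fun i => μ i ^ 2 = t)).card := by
    have := Finset.card_eq_sum_card_fiberwise
      (f := fun i => μ i ^ 2) (s := Finset.univ)
      (t := Finset.image (fun i => μ i ^ 2) Finset.univ)
      (fun x _ => Finset.mem_image_of_mem _ (Finset.mem_univ x))
    simpa using this
  set T := Finset.image (fun i => μ i ^ 2) Finset.univ with hT
  have hcardsplit : (T.filter (fun t => t = 0)).card + (T.filter (fun t => ¬ t = 0)).card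
      = T.card := Finset.card_filter_add_card_filter_not _
  have hT0le : (T.filter (fun t => t = 0)).card ≤ 1 := by
    apply Finset.card_le_one.mpr
    intro a ha b hb
    rw [Finset.mem_filter] at ha hb
    rw [ha.2, hb.2]
  have hsum : ∑ t ∈ T, (Finset.univ.filter (fun i => μ i ^ 2 = t)).card
      = ∑ t ∈ T.filter (fun t => t = 0), (Finset.univ.filter (fun i => μ i ^ 2 = t)).card
      + ∑ t ∈ T.filter (fun t => ¬ t = 0), (Finset.univ.filter (fun i => μ i ^ 2 = t)).card :=
    (Finset.sum_filter_add_sum_filter_not T _ _).symm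
  have h0 : (T.filter (fun t => t = 0)).card
      ≤ ∑ t ∈ T.filter (fun t => t = 0), (Finset.univ.filter (fun i => μ i ^ 2 = t)).card := by
    rw [Finset.card_eq_sum_ones]
    exact Finset.sum_le_sum fun t ht => hfib t (Finset.mem_filter.mp ht).1
  have h1 : 2 * (T.filter (fun t => ¬ t = 0)).card
      ≤ ∑ t ∈ T.filter (fun t => ¬ t = 0), (Finset.univ.filter (fun i => μ i ^ 2 = t)).card := by
    rw [Finset.card_eq_sum_ones, Finset.mul_sum]
    refine Finset.sum_le_sum fun t ht => ?_
    have h2 := Finset.mem_filter.mp ht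
    simpa using hfib2 t h2.1 h2.2
  omega


lemma aux_li_card_ge (n p : ℕ) (hn : 0 < n) (g : Fin n → ℝ)
    (w : Fin p → (Fin n → ℝ)) (c : Fin p → ℝ)
    (hw : ∀ α i, w α i = g i ^ ((α : ℕ) + 1) - c α)
    (hsum : ∀ α, ∑ i, w α i = 0)
    (hli : LinearIndependent ℝ w) :
    p + 1 ≤ (Finset.image g Finset.univ).card := by
  classical
  set T := Finset.image g Finset.univ with hT
  set χ : ℝ → (Fin n → ℝ) := fun t i => if g i = t then 1 else 0 with hχ
  set Sp := Submodule.span ℝ (↑(T.image χ) : Set (Fin n → ℝ)) with hSp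
  let sumF : (Fin n → ℝ) →ₗ[ℝ] ℝ :=
    { toFun := fun f => ∑ i, f i
      map_add' := by intros; simp [Finset.sum_add_distrib]
      map_smul' := by intros; simp [Finset.mul_sum] }
  set K := Sp ⊓ LinearMap.ker sumF with hK
  have hχmem : ∀ t ∈ T, χ t ∈ Sp := fun t ht =>
    Submodule.subset_span (Finset.mem_coe.mpr (Finset.mem_image_of_mem χ ht))
  have hwSp : ∀ α, w α ∈ Sp := by
    intro α
    have hrepr : w α = ∑ t ∈ T, (t ^ ((α : ℕ) + 1) - c α) • χ t := by
      funext i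
      rw [Finset.sum_apply, hw]
      have hgi : g i ∈ T := Finset.mem_image_of_mem _ (Finset.mem_univ i)
      rw [Finset.sum_eq_single (g i)]
      · simp [hχ]
      · intro b _ hbne
        have : g i ≠ b := fun h => hbne h.symm
        simp [hχ, this]
      · intro h; exact absurd hgi h
    rw [hrepr]
    exact Submodule.sum_mem _ fun t ht => Submodule.smul_mem _ _ (hχmem t ht)
  have hwK : ∀ α, w α ∈ K := by
    intro α
    refine Submodule.mem_inf.mpr ⟨hwSp α, LinearMap.mem_ker.mpr ?_⟩
    exact hsum α
  have hKlt : K < Sp := by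
    rw [lt_iff_le_and_ne]
    refine ⟨inf_le_left, fun hEq => ?_⟩
    have h1 : (∑ t ∈ T, χ t) ∈ Sp := Submodule.sum_mem _ fun t ht => hχmem t ht
    rw [← hEq] at h1
    have h2 : sumF (∑ t ∈ T, χ t) = 0 := LinearMap.mem_ker.mp (Submodule.mem_inf.mp h1).2
    have h3 : sumF (∑ t ∈ T, χ t) = (n : ℝ) := by
      have : sumF (∑ t ∈ T, χ t) = ∑ i : Fin n, ∑ t ∈ T, χ t i := by
        show (∑ i : Fin n, (∑ t ∈ T, χ t) i) = _
        exact Finset.sum_congr rfl fun i _ => by rw [Finset.sum_apply]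
      rw [this]
      have : ∀ i : Fin n, ∑ t ∈ T, χ t i = 1 := by
        intro i
        have hgi : g i ∈ T := Finset.mem_image_of_mem _ (Finset.mem_univ i)
        rw [hχ]
        simp only []
        rw [Finset.sum_ite_eq T (g i) (fun _ => (1:ℝ))]
        exact if_pos hgi
      simp [this]
    rw [h2] at h3
    have : (n : ℝ) ≠ 0 := Nat.cast_ne_zero.mpr (by omega)
    exact this h3.symm
  have hrankSp : Module.finrank ℝ Sp ≤ T.card := by
    have h4 : Set.finrank ℝ (↑(T.image χ) : Set (Fin n → ℝ)) ≤ (T.image χ).card :=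
      finrank_span_finset_le_card (T.image χ)
    have h5 : (T.image χ).card ≤ T.card := Finset.card_image_le
    exact le_trans h4 h5
  have hKrank : Module.finrank ℝ K < Module.finrank ℝ Sp :=
    Submodule.finrank_lt_finrank_of_lt hKlt
  have hple : p ≤ Module.finrank ℝ K := by
    let w' : Fin p → K := fun α => ⟨w α, hwK α⟩
    have hli' : LinearIndependent ℝ w' := by
      apply LinearIndependent.of_comp K.subtype
      have : (K.subtype ∘ w') = w := rfl
      rw [this]; exact hli
    have := hli'.fintype_card_le_finrank
    simpa using this
  omega

lemma aux_li_of_card (n p : ℕ) (g : Fin n → ℝ)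
    (w : Fin p → (Fin n → ℝ)) (c : Fin p → ℝ)
    (hw : ∀ α i, w α i = g i ^ ((α : ℕ) + 1) - c α)
    (hcard : p + 1 ≤ (Finset.image g Finset.univ).card) :
    LinearIndependent ℝ w := by
  classical
  rw [Fintype.linearIndependent_iff]
  intro t ht α
  set q : Polynomial ℝ :=
    ∑ β : Fin p, Polynomial.C (t β) * (Polynomial.X ^ ((β : ℕ) + 1) - Polynomial.C (c β))
    with hq
  have heval : ∀ s ∈ Finset.image g Finset.univ, q.eval s = 0 := by
    intro s hs
    obtain ⟨i, _, rfl⟩ := Finset.mem_image.mp hs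
    have hti := congrFun ht i
    simp only [Finset.sum_apply, Pi.smul_apply, smul_eq_mul, Pi.zero_apply] at hti
    rw [hq, Polynomial.eval_finset_sum]
    rw [← hti]
    refine Finset.sum_congr rfl fun β _ => ?_
    rw [hw]
    simp
  have hdeg : q.natDegree < p + 1 := by
    apply Nat.lt_succ_of_le
    rw [hq]
    apply Polynomial.natDegree_sum_le_of_forall_le
    intro β _
    refine le_trans (Polynomial.natDegree_C_mul_le _ _) ?_
    refine le_trans (Polynomial.natDegree_sub_le _ _) ?_
    simp only [Polynomial.natDegree_X_pow, Polynomial.natDegree_C, max_le_iff]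
    exact ⟨β.isLt, Nat.zero_le p⟩
  have hq0 : q = 0 :=
    Polynomial.eq_zero_of_natDegree_lt_card_of_eval_eq_zero' q _ heval (lt_of_lt_of_le hdeg hcard)
  have hco : q.coeff ((α : ℕ) + 1) = t α := by
    rw [hq, Polynomial.finset_sum_coeff]
    rw [Finset.sum_eq_single α]
    · simp [Polynomial.coeff_C_mul, Polynomial.coeff_sub, Polynomial.coeff_X_pow,
        Polynomial.coeff_C]
    · intro β _ hβ
      have hne : ¬ ((β : ℕ) + 1 = (α : ℕ) + 1) := by
        simp only [add_left_inj]
        exact fun h => hβ (Fin.ext h)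
      simp only [Polynomial.coeff_C_mul, Polynomial.coeff_sub, Polynomial.coeff_X_pow,
        Polynomial.coeff_C]
      rw [if_neg (fun h : (α:ℕ)+1 = (β:ℕ)+1 => hne h.symm), if_neg (by omega : ¬ ((α:ℕ)+1 = 0))]
      ring
    · intro h; exact absurd (Finset.mem_univ α) h
  rw [← hco, hq0, Polynomial.coeff_zero]

/-- for an austere unit-norm symmetric matrix `A`, the gradients
`A^{2α} - (1/n) tr(A^{2α}) I` (`1 ≤ α ≤ p`) are linearly independent iff `A²` has
exactly `p+1` distinct eigenvalues. -/
theorem gradients_linearIndependent_iff_card_spectrum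
    (n : ℕ) (hn : 3 ≤ n) (p : ℕ) (hp : p = (n - 1) / 2)
    (A : Matrix (Fin n) (Fin n) ℝ) (hAsym : Aᵀ = A)
    (hA2 : Matrix.trace (A ^ 2) = 1)
    (hodd : ∀ k ≤ p, Matrix.trace (A ^ (2 * k + 1)) = 0) :
    LinearIndependent ℝ
        (fun α : Fin p =>
          A ^ (2 * ((α : ℕ) + 1)) -
            (Matrix.trace (A ^ (2 * ((α : ℕ) + 1))) / (n : ℝ)) •
              (1 : Matrix (Fin n) (Fin n) ℝ)) ↔
      (spectrum ℝ (A ^ 2)).ncard = p + 1 := by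
  classical
  have hnR : (n : ℝ) ≠ 0 := Nat.cast_ne_zero.mpr (by omega)
  have hA : A.IsHermitian := by
    rw [Matrix.IsHermitian, Matrix.conjTranspose_eq_transpose_of_trivial]
    exact hAsym
  set μ : Fin n → ℝ := hA.eigenvalues with hμ
  set U : Matrix (Fin n) (Fin n) ℝ := ↑hA.eigenvectorUnitary with hUdef
  have hU2 : U * star U = 1 := Matrix.mem_unitaryGroup_iff.mp hA.eigenvectorUnitary.2
  have hU1 : star U * U = 1 := Matrix.UnitaryGroup.star_mul_self hA.eigenvectorUnitary
  have hAeq : A = U * Matrix.diagonal μ * star U := by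
    have h := hA.spectral_theorem
    have h2 : (RCLike.ofReal ∘ μ : Fin n → ℝ) = μ := by
      funext i; simp [RCLike.ofReal_real_eq_id]
    rw [h2] at h
    exact h
  have key : ∀ X Y : Matrix (Fin n) (Fin n) ℝ,
      (U * X * star U) * (U * Y * star U) = U * (X * Y) * star U := by
    intro X Y
    have h : (U * X * star U) * (U * Y * star U) = U * (X * ((star U * U) * Y)) * star U := by
      noncomm_ring
    rw [h, hU1, one_mul]
  have hAk : ∀ k : ℕ, A ^ k = U * Matrix.diagonal (fun i => μ i ^ k) * star U := by
    intro k
    induction k with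
    | zero =>
      simp only [pow_zero]
      rw [Matrix.diagonal_one, mul_one, hU2]
    | succ k ih =>
      rw [pow_succ, ih, hAeq, key, Matrix.diagonal_mul_diagonal]
      have hfp : (fun i => μ i ^ k * μ i) = fun i => μ i ^ (k + 1) := by
        funext i
        rw [← pow_succ]
      rw [hfp]
  have htr : ∀ k : ℕ, Matrix.trace (A ^ k) = ∑ i, μ i ^ k := by
    intro k
    rw [hAk k, Matrix.trace_mul_cycle, hU1, one_mul, Matrix.trace_diagonal]
  have hP : ∀ j, Odd j → j ≤ 2*p+1 → ∑ i, μ i ^ j = 0 := by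
    intro j hj hjle
    obtain ⟨k, hk⟩ := hj
    rw [← htr]
    have : j = 2 * k + 1 := by omega
    rw [this]
    exact hodd k (by omega)
  -- spectrum
  set u : (Matrix (Fin n) (Fin n) ℝ)ˣ := ⟨U, star U, hU2, hU1⟩ with hu
  have hspec : spectrum ℝ (A ^ 2) = Set.range (fun i => μ i ^ 2) := by
    rw [hAk 2]
    have : spectrum ℝ (U * Matrix.diagonal (fun i => μ i ^ 2) * star U)
        = spectrum ℝ (Matrix.diagonal (fun i => μ i ^ 2)) :=
      spectrum.units_conjugate (u := u)
    rw [this, spectrum_diagonal]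
  have hncard : (spectrum ℝ (A ^ 2)).ncard
      = (Finset.image (fun i => μ i ^ 2) Finset.univ).card := by
    rw [hspec, ← Fintype.coe_image_univ, Set.ncard_coe_finset]
  -- the vectors
  set v : Fin p → (Fin n → ℝ) := fun α => fun i =>
    μ i ^ (2 * ((α : ℕ) + 1)) - (∑ j, μ j ^ (2 * ((α : ℕ) + 1))) / n with hv
  set L : (Fin n → ℝ) →ₗ[ℝ] Matrix (Fin n) (Fin n) ℝ :=
    { toFun := fun d => U * Matrix.diagonal d * star U
      map_add' := fun d e => by
        show U * Matrix.diagonal (d + e) * star U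
          = U * Matrix.diagonal d * star U + U * Matrix.diagonal e * star U
        have hde : Matrix.diagonal (d + e) = Matrix.diagonal d + Matrix.diagonal e := by
          rw [Matrix.diagonal_add]
          rfl
        rw [hde, Matrix.mul_add, Matrix.add_mul]
      map_smul' := fun r d => by
        show U * Matrix.diagonal (r • d) * star U = r • (U * Matrix.diagonal d * star U)
        rw [Matrix.diagonal_smul, Matrix.mul_smul, Matrix.smul_mul] } with hL
  have hLker : LinearMap.ker L = ⊥ := by
    rw [LinearMap.ker_eq_bot]
    intro d e h
    have h2 : U * Matrix.diagonal d * star U = U * Matrix.diagonal e * star U := h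
    apply Matrix.diagonal_injective (n := Fin n) (α := ℝ)
    have h3 := congrArg (fun M => star U * M * U) h2
    have h4 : ∀ M : Matrix (Fin n) (Fin n) ℝ, star U * (U * M * star U) * U = M := by
      intro M
      have h5 : star U * (U * M * star U) * U = (star U * U) * M * (star U * U) := by
        noncomm_ring
      rw [h5, hU1, one_mul, mul_one]
    rw [h4, h4] at h3
    exact h3
  have hsm : ∀ cc : ℝ, U * (cc • (1 : Matrix (Fin n) (Fin n) ℝ)) * star U
      = cc • (1 : Matrix (Fin n) (Fin n) ℝ) := by
    intro cc
    rw [Matrix.mul_smul, Matrix.smul_mul, mul_one, hU2]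
  have hBv : (fun α : Fin p =>
      A ^ (2 * ((α : ℕ) + 1)) -
        (Matrix.trace (A ^ (2 * ((α : ℕ) + 1))) / (n : ℝ)) •
          (1 : Matrix (Fin n) (Fin n) ℝ)) = L ∘ v := by
    funext α
    show _ = U * Matrix.diagonal (v α) * star U
    rw [htr, hAk]
    have hd : Matrix.diagonal (v α) = Matrix.diagonal (fun i => μ i ^ (2 * ((α : ℕ) + 1)))
        - ((∑ j, μ j ^ (2 * ((α : ℕ) + 1))) / n) • (1 : Matrix (Fin n) (Fin n) ℝ) := by
      rw [Matrix.smul_one_eq_diagonal, ← Matrix.diagonal_sub]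
    rw [hd, Matrix.mul_sub, Matrix.sub_mul, hsm]
  have hLI : LinearIndependent ℝ
      (fun α : Fin p =>
        A ^ (2 * ((α : ℕ) + 1)) -
          (Matrix.trace (A ^ (2 * ((α : ℕ) + 1))) / (n : ℝ)) •
            (1 : Matrix (Fin n) (Fin n) ℝ)) ↔ LinearIndependent ℝ v := by
    rw [hBv]
    exact LinearMap.linearIndependent_iff L hLker
  -- core facts
  have hvw : ∀ (α : Fin p) (i : Fin n),
      v α i = (μ i ^ 2) ^ ((α : ℕ) + 1)
        - (∑ j, μ j ^ (2 * ((α : ℕ) + 1))) / n := by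
    intro α i
    rw [hv]
    simp only []
    rw [← pow_mul]
  have hvsum : ∀ α : Fin p, ∑ i, v α i = 0 := by
    intro α
    rw [hv]
    simp only []
    rw [Finset.sum_sub_distrib]
    rw [Finset.sum_const, Finset.card_univ, Fintype.card_fin]
    rw [nsmul_eq_mul]
    field_simp
    ring
  have hcard_le : (Finset.image (fun i => μ i ^ 2) Finset.univ).card ≤ p + 1 := by
    have h := aux_card_sq n p (by omega) μ hP
    omega
  rw [hLI, hncard]
  constructor
  · intro hli
    have := aux_li_card_ge n p (by omega) (fun i => μ i ^ 2) v
      (fun α => (∑ j, μ j ^ (2 * ((α : ℕ) + 1))) / n) hvw hvsum hli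
    omega
  · intro hc
    exact aux_li_of_card n p (fun i => μ i ^ 2) v
      (fun α => (∑ j, μ j ^ (2 * ((α : ℕ) + 1))) / n) hvw (by omega)
end

section
/- Let n = 2p+1 with p ≥ 1 and let A = диag(λ₁, −λ₁, λ₂, −λ₂, …, λ_p, −λ_p, 0) be the n×n diagonal matrix with λ₁ > λ₂ > … > λ_p > 0 and 2(λ₁² + … + λ_p²) = 1. Then the subspace {X an n×n real symmetric matrix : tr X = 0, tr(XA) = 0, and tr(X A^{2α}) = 0 for all 1 ≤ α ≤ p} is exactly the ℝ-linear span of the set {Ê_{ij} : 1 ≤ i < j ≤ n} ∪ {X_α(A) : 1 ≤ α ≤ p−1}. -/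
open Matrix

lemma vdet_ne (p : ℕ) (μ : Fin p → ℝ) (hinj : Function.Injective μ) :
    IsUnit (Matrix.vandermonde μ) := by
  rw [Matrix.isUnit_iff_isUnit_det, isUnit_iff_ne_zero, Matrix.det_vandermonde]
  rw [Finset.prod_ne_zero_iff]
  intro i _
  rw [Finset.prod_ne_zero_iff]
  intro j hj
  have : i ≠ j := by rintro rfl; simp at hj
  exact sub_ne_zero.2 fun h => this (hinj h.symm)

/-- Vandermonde solve: any vector is a combination of power vectors. -/
lemma vand_solve (p : ℕ) (μ : Fin p → ℝ) (hinj : Function.Injective μ)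
    (y : Fin p → ℝ) : ∃ t : Fin p → ℝ, ∀ k, y k = ∑ β : Fin p, t β * μ k ^ (β : ℕ) := by
  obtain ⟨t, ht⟩ := (Matrix.mulVec_surjective_iff_isUnit.2 (vdet_ne p μ hinj)) y
  exact ⟨t, fun k => by
    have := congrFun ht k
    simp [Matrix.mulVec, dotProduct, Matrix.vandermonde_apply, mul_comm] at this
    rw [← this]⟩

/-- Vandermonde kernel: shifted power constraints force zero. -/
lemma vand_ker (p : ℕ) (μ : Fin p → ℝ) (hinj : Function.Injective μ)
    (hne : ∀ k, μ k ≠ 0) (s : Fin p → ℝ)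
    (hs : ∀ α : Fin p, ∑ k, s k * μ k ^ ((α : ℕ) + 1) = 0) : s = 0 := by
  set M : Matrix (Fin p) (Fin p) ℝ := Matrix.diagonal μ * Matrix.vandermonde μ with hM
  have hunit : IsUnit M := by
    rw [Matrix.isUnit_iff_isUnit_det, Matrix.det_mul, Matrix.det_diagonal]
    exact (IsUnit.mul (isUnit_iff_ne_zero.2 (Finset.prod_ne_zero_iff.2 fun k _ => hne k))
      ((Matrix.isUnit_iff_isUnit_det _).1 (vdet_ne p μ hinj)))
  have hinjv := Matrix.vecMul_injective_iff_isUnit.2 hunit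
  have : s ᵥ* M = 0 ᵥ* M := by
    funext α
    simp only [Matrix.vecMul, dotProduct, hM, Matrix.mul_apply, Matrix.zero_vecMul,
      Matrix.diagonal_apply, Pi.zero_apply, zero_mul, Finset.sum_const_zero,
      Matrix.vandermonde_apply, ite_mul]
    have inner : ∀ k : Fin p, (∑ x : Fin p, if k = x then μ k * μ x ^ (α:ℕ) else 0)
        = μ k ^ ((α:ℕ)+1) := by
      intro k
      rw [Finset.sum_ite_eq _ k (fun x => μ k * μ x ^ (α:ℕ))]
      simp [pow_succ, mul_comm]
    simp_rw [inner]
    exact hs α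
  have := hinjv this
  simpa using this

lemma sum_div2 (p : ℕ) (f : ℕ → ℝ) :
    ∑ i ∈ Finset.range (2 * p), f i = ∑ k ∈ Finset.range p, (f (2 * k) + f (2 * k + 1)) := by
  induction p with
  | zero => simp
  | succ q ih =>
      rw [Finset.sum_range_succ, ← ih, Nat.mul_succ, Finset.sum_range_succ, Finset.sum_range_succ]
      ring_nf

lemma sum_fin_odd (p : ℕ) (f : Fin (2 * p + 1) → ℝ) :
    ∑ i, f i = (∑ k : Fin p, (f ⟨2 * k, by omega⟩ + f ⟨2 * k + 1, by omega⟩)) + f ⟨2 * p, by omega⟩ := by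
  set F : ℕ → ℝ := fun i => if h : i < 2 * p + 1 then f ⟨i, h⟩ else 0 with hF
  have h1 : ∑ i, f i = ∑ i ∈ Finset.range (2 * p + 1), F i := by
    rw [← Fin.sum_univ_eq_sum_range F (2 * p + 1)]
    apply Finset.sum_congr rfl
    intro i _
    simp [hF, i.isLt]
    intro h; have := i.isLt; omega
  rw [h1, Finset.sum_range_succ, sum_div2]
  have h2 : ∑ k ∈ Finset.range p, (F (2 * k) + F (2 * k + 1)) =
      ∑ k : Fin p, (f ⟨2 * k, by omega⟩ + f ⟨2 * k + 1, by omega⟩) := by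
    rw [← Fin.sum_univ_eq_sum_range (fun k => F (2 * k) + F (2 * k + 1)) p]
    apply Finset.sum_congr rfl
    intro k _
    have hk : (k : ℕ) < p := k.isLt
    simp only [hF]
    rw [dif_pos (by omega : 2 * (k:ℕ) < 2 * p + 1), dif_pos (by omega : 2 * (k:ℕ) + 1 < 2 * p + 1)]
  rw [h2, hF]
  simp

lemma stdBasis_transpose (n : ℕ) (i j : Fin n) (c : ℝ) :
    (Matrix.single i j c)ᵀ = Matrix.single j i c := by
  ext a b
  simp [Matrix.single, Matrix.transpose_apply, and_comm]

lemma trE (n : ℕ) (i j : Fin n) (h : i ≠ j) (w : Fin n → ℝ) :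
    trace (Matrix.single i j (1:ℝ) * diagonal w) = 0 := by
  simp only [Matrix.trace, Matrix.mul_apply, Matrix.diagonal_apply, Matrix.diag,
    Matrix.single, Matrix.of_apply]
  apply Finset.sum_eq_zero
  intro k _
  apply Finset.sum_eq_zero
  intro l _
  by_cases h1 : i = k ∧ j = l
  · obtain ⟨rfl, rfl⟩ := h1
    rw [if_pos ⟨rfl, rfl⟩, if_neg (by exact fun e => h e.symm), mul_zero]
  · rw [if_neg h1, zero_mul]

lemma sym_offdiag_decomp {n : ℕ} (X : Matrix (Fin n) (Fin n) ℝ) (hsym : Xᵀ = X) :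
    X - Matrix.diagonal (fun i => X i i) =
    ∑ q ∈ Finset.univ.filter (fun q : Fin n × Fin n => q.1 < q.2),
      X q.1 q.2 • (Matrix.single q.1 q.2 1 + Matrix.single q.2 q.1 1) := by
  ext a b
  rw [Matrix.sum_apply]
  simp only [Matrix.sub_apply, Matrix.diagonal_apply, Matrix.smul_apply, Matrix.add_apply,
    Matrix.single, Matrix.of_apply, smul_eq_mul]
  rcases lt_trichotomy a b with h|h|h
  · rw [if_neg h.ne, Finset.sum_eq_single_of_mem (a, b)
      (by simp [h]) ?_]
    · have h1 : ¬(b = a ∧ a = b) := by rintro ⟨rfl, -⟩; exact lt_irrefl _ h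
      simp [h1]
    · rintro ⟨i, j⟩ hij hne
      simp only [Finset.mem_filter] at hij
      have : ¬(i = a ∧ j = b) := fun ⟨h1, h2⟩ => hne (by simp [h1, h2])
      have h2 : ¬(j = a ∧ i = b) := by
        rintro ⟨rfl, rfl⟩; exact absurd hij.2 (asymm h)
      simp [this, h2]
  · subst h
    rw [if_pos rfl, Finset.sum_eq_zero, sub_self]
    rintro ⟨i, j⟩ hij
    simp only [Finset.mem_filter] at hij
    have h1 : ¬(i = a ∧ j = a) := by rintro ⟨rfl, rfl⟩; exact lt_irrefl _ hij.2
    have h2 : ¬(j = a ∧ i = a) := by rintro ⟨rfl, rfl⟩; exact lt_irrefl _ hij.2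
    simp [h1, h2]
  · rw [if_neg h.ne', Finset.sum_eq_single_of_mem (b, a) (by simp [h]) ?_]
    · have h1 : ¬(b = a ∧ a = b) := by rintro ⟨rfl, -⟩; exact lt_irrefl _ h
      have hXs : X b a = X a b := by conv_lhs => rw [← hsym, Matrix.transpose_apply]
      simp [h1, hXs]
    · rintro ⟨i, j⟩ hij hne
      simp only [Finset.mem_filter] at hij
      have h1 : ¬(i = a ∧ j = b) := by rintro ⟨rfl, rfl⟩; exact absurd hij.2 (asymm h)
      have h2 : ¬(j = a ∧ i = b) := fun ⟨ha, hb⟩ => hne (by simp [ha, hb])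
      simp [h1, h2]

def Dfun (p : ℕ) (lam : Fin p → ℝ) : Fin (2 * p + 1) → ℝ := fun i =>
  if h : (i : ℕ) < 2 * p then (-1 : ℝ) ^ ((i : ℕ) % 2) * lam ⟨(i : ℕ) / 2, Nat.div_lt_of_lt_mul h⟩ else 0

lemma Dfun_even (p : ℕ) (lam : Fin p → ℝ) (k : Fin p) (h : 2 * (k:ℕ) < 2 * p + 1) :
    Dfun p lam ⟨2 * (k:ℕ), h⟩ = lam k := by
  have hk : (k:ℕ) < p := k.isLt
  simp only [Dfun]
  rw [dif_pos (by omega : 2*(k:ℕ) < 2*p)]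
  have h2 : (2 * (k:ℕ)) % 2 = 0 := by omega
  have h3 : (2 * (k:ℕ)) / 2 = (k:ℕ) := by omega
  simp only [h2, pow_zero, one_mul]
  congr 1
  exact Fin.ext h3

lemma Dfun_odd (p : ℕ) (lam : Fin p → ℝ) (k : Fin p) (h : 2 * (k:ℕ) + 1 < 2 * p + 1) :
    Dfun p lam ⟨2 * (k:ℕ) + 1, h⟩ = -lam k := by
  have hk : (k:ℕ) < p := k.isLt
  simp only [Dfun]
  rw [dif_pos (by omega : 2*(k:ℕ)+1 < 2*p)]
  have h2 : (2 * (k:ℕ) + 1) % 2 = 1 := by omega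
  have h3 : (2 * (k:ℕ) + 1) / 2 = (k:ℕ) := by omega
  simp only [h2, pow_one, neg_one_mul, neg_inj]
  congr 1
  exact Fin.ext h3

lemma Dfun_last (p : ℕ) (lam : Fin p → ℝ) (h : 2 * p < 2 * p + 1) :
    Dfun p lam ⟨2 * p, h⟩ = 0 := by
  simp only [Dfun]
  rw [dif_neg (by omega : ¬ (2*p < 2*p))]

noncomputable def Tsum (p : ℕ) (lam : Fin p → ℝ) (m : ℕ) : ℝ := ∑ i, Dfun p lam i ^ m

lemma T_odd (p : ℕ) (lam : Fin p → ℝ) (m : ℕ) : Tsum p lam (2 * m + 1) = 0 := by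
  rw [Tsum, sum_fin_odd p (fun i => Dfun p lam i ^ (2 * m + 1))]
  rw [Dfun_last]
  rw [zero_pow (by omega), add_zero]
  apply Finset.sum_eq_zero
  intro k _
  rw [Dfun_even, Dfun_odd, Odd.neg_pow ⟨m, by ring⟩, add_neg_cancel]

lemma T_even (p : ℕ) (lam : Fin p → ℝ) (m : ℕ) (hm : 1 ≤ m) :
    Tsum p lam (2 * m) = 2 * ∑ k, (lam k ^ 2) ^ m := by
  rw [Tsum, sum_fin_odd p (fun i => Dfun p lam i ^ (2 * m))]
  rw [Dfun_last]
  rw [zero_pow (by omega), add_zero, Finset.mul_sum]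
  apply Finset.sum_congr rfl
  intro k _
  rw [Dfun_even, Dfun_odd, Even.neg_pow ⟨m, by ring⟩, ← pow_mul]
  ring

set_option maxHeartbeats 1600000 in
/-- tangent space of `B_{n,ℝ}` at a diagonal point, odd case `n = 2p+1`. -/
theorem tangent_space_odd_case (p : ℕ) (hp : 1 ≤ p) (lam : Fin p → ℝ)
    (hanti : StrictAnti lam) (hpos : ∀ i, 0 < lam i)
    (hsum : 2 * ∑ i, lam i ^ 2 = 1)
    (A : Matrix (Fin (2 * p + 1)) (Fin (2 * p + 1)) ℝ)
    (hA : A = Matrix.diagonal (fun i : Fin (2 * p + 1) =>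
      if h : (i : ℕ) < 2 * p then
        (-1 : ℝ) ^ ((i : ℕ) % 2) * lam ⟨(i : ℕ) / 2, by omega⟩
      else 0)) :
    {X : Matrix (Fin (2 * p + 1)) (Fin (2 * p + 1)) ℝ |
        Xᵀ = X ∧ Matrix.trace X = 0 ∧ Matrix.trace (X * A) = 0 ∧
          ∀ α, 1 ≤ α → α ≤ p → Matrix.trace (X * A ^ (2 * α)) = 0} =
      ↑(Submodule.span ℝ
        ({M | ∃ i j : Fin (2 * p + 1), i < j ∧
            M = (Real.sqrt 2)⁻¹ •
              (Matrix.single i j 1 + Matrix.single j i 1)} ∪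
         {M | ∃ α, 1 ≤ α ∧ α ≤ p - 1 ∧
            M = A ^ (2 * α + 1) - Matrix.trace (A ^ (2 * α + 2)) • A})) := by
  have hA' : A = Matrix.diagonal (Dfun p lam) := hA
  clear hA
  -- basic facts about A and traces
  have hApow : ∀ m : ℕ, A ^ m = Matrix.diagonal (fun i => Dfun p lam i ^ m) := by
    intro m
    rw [hA', Matrix.diagonal_pow]
    congr 1
  have htrXm : ∀ (X : Matrix (Fin (2*p+1)) (Fin (2*p+1)) ℝ) (m : ℕ),
      Matrix.trace (X * A ^ m) = ∑ i, X i i * Dfun p lam i ^ m := by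
    intro X m
    rw [hApow m]
    simp [Matrix.trace, Matrix.mul_apply, Matrix.diagonal_apply, Matrix.diag,
      Finset.sum_ite_eq]
  have htrX1 : ∀ (X : Matrix (Fin (2*p+1)) (Fin (2*p+1)) ℝ),
      Matrix.trace (X * A) = ∑ i, X i i * Dfun p lam i := by
    intro X
    have := htrXm X 1
    rw [pow_one] at this
    simpa using this
  have htrm : ∀ m : ℕ, Matrix.trace (A ^ m) = Tsum p lam m := by
    intro m
    rw [hApow m, Matrix.trace_diagonal]
    rfl
  have hT2 : Tsum p lam 2 = 1 := by
    rw [show (2:ℕ) = 2 * 1 by rfl, T_even p lam 1 le_rfl]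
    simpa using hsum
  have hAt : Aᵀ = A := by rw [hA']; exact Matrix.diagonal_transpose _
  -- the constraint submodule
  set S : Submodule ℝ (Matrix (Fin (2*p+1)) (Fin (2*p+1)) ℝ) :=
    { carrier := {X | Xᵀ = X ∧ Matrix.trace X = 0 ∧ Matrix.trace (X * A) = 0 ∧
          ∀ α, 1 ≤ α → α ≤ p → Matrix.trace (X * A ^ (2 * α)) = 0}
      add_mem' := by
        rintro a b ⟨a1, a2, a3, a4⟩ ⟨b1, b2, b3, b4⟩
        refine ⟨by rw [Matrix.transpose_add, a1, b1], ?_, ?_, ?_⟩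
        · rw [Matrix.trace_add, a2, b2, add_zero]
        · rw [add_mul, Matrix.trace_add, a3, b3, add_zero]
        · intro α h1 h2
          rw [add_mul, Matrix.trace_add, a4 α h1 h2, b4 α h1 h2, add_zero]
      zero_mem' := by
        refine ⟨Matrix.transpose_zero, by rw [Matrix.trace_zero], ?_, ?_⟩
        · rw [zero_mul, Matrix.trace_zero]
        · intro α _ _; rw [zero_mul, Matrix.trace_zero]
      smul_mem' := by
        rintro c a ⟨a1, a2, a3, a4⟩
        refine ⟨by rw [Matrix.transpose_smul, a1], ?_, ?_, ?_⟩
        · rw [Matrix.trace_smul, a2, smul_zero]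
        · rw [Matrix.smul_mul, Matrix.trace_smul, a3, smul_zero]
        · intro α h1 h2
          rw [Matrix.smul_mul, Matrix.trace_smul, a4 α h1 h2, smul_zero] } with hS
  apply Set.eq_of_subset_of_subset
  · -- forward inclusion: constraints imply membership in span
    rintro X ⟨hsym, h0, h1, h2⟩
    have hμinj : Function.Injective (fun k : Fin p => lam k ^ 2) := by
      have hsa : StrictAnti (fun k : Fin p => lam k ^ 2) := by
        intro a b hab
        have h1 := hanti hab
        have h2 := hpos a
        have h3 := hpos b
        simp only
        nlinarith
      exact hsa.injective
    have hμne : ∀ k : Fin p, (fun k : Fin p => lam k ^ 2) k ≠ 0 :=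
      fun k => pow_ne_zero 2 (hpos k).ne'
    -- pair sums vanish
    have hsvanish : ∀ α : Fin p, ∑ k : Fin p,
        (X ⟨2*(k:ℕ), by omega⟩ ⟨2*(k:ℕ), by omega⟩ +
         X ⟨2*(k:ℕ)+1, by omega⟩ ⟨2*(k:ℕ)+1, by omega⟩) * (lam k ^ 2) ^ ((α:ℕ)+1) = 0 := by
      intro α
      have hcon := h2 ((α:ℕ)+1) (by omega) (by omega)
      rw [htrXm X (2*((α:ℕ)+1)),
        sum_fin_odd p (fun i => X i i * Dfun p lam i ^ (2*((α:ℕ)+1)))] at hcon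
      simp only [Dfun_even, Dfun_odd, Dfun_last] at hcon
      rw [zero_pow (by omega : 2*((α:ℕ)+1) ≠ 0), mul_zero, add_zero] at hcon
      rw [← hcon]
      apply Finset.sum_congr rfl
      intro k _
      rw [Even.neg_pow ⟨(α:ℕ)+1, by ring⟩, pow_mul]
      ring
    have hs0' := vand_ker p (fun k : Fin p => lam k ^ 2) hμinj hμne _ hsvanish
    have hs0 : ∀ k : Fin p, X ⟨2*(k:ℕ), by omega⟩ ⟨2*(k:ℕ), by omega⟩ +
        X ⟨2*(k:ℕ)+1, by omega⟩ ⟨2*(k:ℕ)+1, by omega⟩ = 0 := fun k => congrFun hs0' k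
    have hxo : ∀ k : Fin p, X ⟨2*(k:ℕ)+1, by omega⟩ ⟨2*(k:ℕ)+1, by omega⟩ =
        - X ⟨2*(k:ℕ), by omega⟩ ⟨2*(k:ℕ), by omega⟩ := by
      intro k
      have := hs0 k
      linarith
    have hxz : X ⟨2*p, by omega⟩ ⟨2*p, by omega⟩ = 0 := by
      have h0' : ∑ i, X i i = 0 := by rw [← h0]; rfl
      rw [sum_fin_odd p (fun i => X i i)] at h0'
      rw [Finset.sum_eq_zero (fun k _ => hs0 k), zero_add] at h0'
      exact h0'
    have hlin : ∑ k : Fin p, lam k * X ⟨2*(k:ℕ), by omega⟩ ⟨2*(k:ℕ), by omega⟩ = 0 := by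
      have h1' := h1
      rw [htrX1 X, sum_fin_odd p (fun i => X i i * Dfun p lam i)] at h1'
      simp only [Dfun_even, Dfun_odd, Dfun_last, mul_zero, add_zero] at h1'
      have he : ∀ k : Fin p, X ⟨2*(k:ℕ), by omega⟩ ⟨2*(k:ℕ), by omega⟩ * lam k +
          X ⟨2*(k:ℕ)+1, by omega⟩ ⟨2*(k:ℕ)+1, by omega⟩ * (-lam k) =
          2 * (lam k * X ⟨2*(k:ℕ), by omega⟩ ⟨2*(k:ℕ), by omega⟩) := by
        intro k
        rw [hxo k]
        ring
      rw [Finset.sum_congr rfl (fun k _ => he k), ← Finset.mul_sum] at h1'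
      linarith
    -- Vandermonde solve
    obtain ⟨t, ht⟩ := vand_solve p (fun k : Fin p => lam k ^ 2) hμinj
      (fun k => X ⟨2*(k:ℕ), by omega⟩ ⟨2*(k:ℕ), by omega⟩ / lam k)
    have hxe : ∀ k : Fin p, X ⟨2*(k:ℕ), by omega⟩ ⟨2*(k:ℕ), by omega⟩ =
        lam k * ∑ β : Fin p, t β * (lam k ^ 2) ^ (β:ℕ) := by
      intro k
      have h := ht k
      simp only at h
      rw [div_eq_iff (hpos k).ne'] at h
      rw [h]
      ring
    set i0 : Fin p := ⟨0, hp⟩ with hi0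
    -- power sum constraint
    have h2' : ∑ k : Fin p, (∑ β : Fin p, t β * (lam k ^ 2) ^ ((β:ℕ)+1)) = 0 := by
      have e1 : ∀ k : Fin p, (∑ β : Fin p, t β * (lam k ^ 2) ^ ((β:ℕ)+1)) =
          lam k * X ⟨2*(k:ℕ), by omega⟩ ⟨2*(k:ℕ), by omega⟩ := by
        intro k
        rw [hxe k, Finset.mul_sum, ← Finset.mul_sum, Finset.mul_sum, Finset.mul_sum]
        apply Finset.sum_congr rfl
        intro β _
        rw [pow_succ]
        ring
      rw [Finset.sum_congr rfl (fun k _ => e1 k)]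
      exact hlin
    have hP : ∑ β : Fin p, t β * (∑ k : Fin p, (lam k ^ 2) ^ ((β:ℕ)+1)) = 0 := by
      rw [← h2', Finset.sum_comm]
      apply Finset.sum_congr rfl
      intro β _
      rw [Finset.mul_sum]
    have hc : ∀ β : Fin p, Tsum p lam (2*(β:ℕ)+2) = 2 * ∑ k : Fin p, (lam k ^ 2) ^ ((β:ℕ)+1) := by
      intro β
      rw [show 2*(β:ℕ)+2 = 2*((β:ℕ)+1) by ring, T_even p lam ((β:ℕ)+1) (by omega)]
    have ht0 : t i0 = - ∑ β ∈ Finset.univ.erase i0, t β * Tsum p lam (2*(β:ℕ)+2) := by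
      have hsplit : t i0 * (∑ k : Fin p, (lam k ^ 2) ^ (((i0:Fin p):ℕ)+1)) +
          ∑ β ∈ Finset.univ.erase i0, t β * (∑ k : Fin p, (lam k ^ 2) ^ ((β:ℕ)+1)) =
          ∑ β : Fin p, t β * (∑ k : Fin p, (lam k ^ 2) ^ ((β:ℕ)+1)) :=
        Finset.add_sum_erase Finset.univ
          (fun β : Fin p => t β * (∑ k : Fin p, (lam k ^ 2) ^ ((β:ℕ)+1))) (Finset.mem_univ i0)
      have hμ1 : (∑ k : Fin p, (lam k ^ 2) ^ (((i0:Fin p):ℕ)+1)) = 1/2 := by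
        have : ∀ k : Fin p, (lam k ^ 2) ^ (((i0:Fin p):ℕ)+1) = lam k ^ 2 := by
          intro k
          rw [hi0]
          norm_num
        rw [Finset.sum_congr rfl (fun k _ => this k)]
        linarith
      rw [hP, hμ1] at hsplit
      have he2 : ∑ β ∈ Finset.univ.erase i0, t β * Tsum p lam (2*(β:ℕ)+2) =
          2 * ∑ β ∈ Finset.univ.erase i0, t β * (∑ k : Fin p, (lam k ^ 2) ^ ((β:ℕ)+1)) := by
        rw [Finset.mul_sum]
        apply Finset.sum_congr rfl
        intro β _
        rw [hc β]
        ring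
      rw [he2]
      linarith
    -- key identity at even indices
    have keyE : ∀ k : Fin p, X ⟨2*(k:ℕ), by omega⟩ ⟨2*(k:ℕ), by omega⟩ =
        ∑ β ∈ Finset.univ.erase i0,
          t β * (lam k ^ (2*(β:ℕ)+1) - Tsum p lam (2*(β:ℕ)+2) * lam k) := by
      intro k
      have hpow : ∀ β : ℕ, lam k ^ (2*β+1) = (lam k ^ 2) ^ β * lam k := by
        intro β
        rw [pow_add, pow_mul, pow_one]
      have expand : ∑ β ∈ Finset.univ.erase i0,
          t β * (lam k ^ (2*(β:ℕ)+1) - Tsum p lam (2*(β:ℕ)+2) * lam k) =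
          (∑ β ∈ Finset.univ.erase i0, t β * (lam k ^ 2) ^ (β:ℕ)) * lam k
            - (∑ β ∈ Finset.univ.erase i0, t β * Tsum p lam (2*(β:ℕ)+2)) * lam k := by
        rw [Finset.sum_mul, Finset.sum_mul, ← Finset.sum_sub_distrib]
        apply Finset.sum_congr rfl
        intro β _
        rw [hpow (β:ℕ)]
        ring
      rw [expand, hxe k]
      have hsplit2 : t i0 * (lam k ^ 2) ^ (((i0:Fin p):ℕ)) +
          ∑ β ∈ Finset.univ.erase i0, t β * (lam k ^ 2) ^ (β:ℕ) =
          ∑ β : Fin p, t β * (lam k ^ 2) ^ (β:ℕ) :=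
        Finset.add_sum_erase Finset.univ
          (fun β : Fin p => t β * (lam k ^ 2) ^ (β:ℕ)) (Finset.mem_univ i0)
      rw [← hsplit2]
      have hμ0 : (lam k ^ 2) ^ (((i0:Fin p):ℕ)) = 1 := by rw [hi0]; norm_num
      rw [hμ0, ht0]
      ring
    -- key identity for all indices
    have key : ∀ i : Fin (2*p+1), X i i = ∑ β ∈ Finset.univ.erase i0,
        t β * (Dfun p lam i ^ (2*(β:ℕ)+1) - Tsum p lam (2*(β:ℕ)+2) * Dfun p lam i) := by
      intro i
      by_cases hi : (i:ℕ) < 2*p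
      · set k : Fin p := ⟨(i:ℕ)/2, by omega⟩ with hk
        by_cases hpar : (i:ℕ) % 2 = 0
        · have hieq : i = (⟨2*(k:ℕ), by omega⟩ : Fin (2*p+1)) := by
            apply Fin.ext
            simp only [hk]
            omega
          rw [hieq]
          rw [keyE k]
          apply Finset.sum_congr rfl
          intro β _
          rw [Dfun_even]
        · have hieq : i = (⟨2*(k:ℕ)+1, by omega⟩ : Fin (2*p+1)) := by
            apply Fin.ext
            simp only [hk]
            omega
          rw [hieq, hxo k, keyE k]
          rw [← Finset.sum_neg_distrib]
          apply Finset.sum_congr rfl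
          intro β _
          rw [Dfun_odd, Odd.neg_pow ⟨(β:ℕ), by ring⟩]
          ring
      · have hieq : i = (⟨2*p, by omega⟩ : Fin (2*p+1)) := by
          apply Fin.ext
          show (i:ℕ) = 2*p
          have := i.isLt
          omega
        rw [hieq, hxz]
        symm
        apply Finset.sum_eq_zero
        intro β _
        rw [Dfun_last, zero_pow (by omega : 2*(β:ℕ)+1 ≠ 0)]
        ring
    -- diagonal part as a combination of the generators
    have hdiag : Matrix.diagonal (fun i => X i i) =
        ∑ β ∈ Finset.univ.erase i0,
          t β • (A ^ (2*(β:ℕ)+1) - Matrix.trace (A ^ (2*(β:ℕ)+2)) • A) := by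
      ext a b
      rw [Matrix.sum_apply]
      by_cases hab : a = b
      · subst hab
        rw [Matrix.diagonal_apply_eq, key a]
        apply Finset.sum_congr rfl
        intro β _
        rw [Matrix.smul_apply, Matrix.sub_apply, Matrix.smul_apply, hApow, htrm,
          Matrix.diagonal_apply_eq, hA', Matrix.diagonal_apply_eq, smul_eq_mul, smul_eq_mul]
      · rw [Matrix.diagonal_apply_ne _ hab]
        symm
        apply Finset.sum_eq_zero
        intro β _
        rw [Matrix.smul_apply, Matrix.sub_apply, Matrix.smul_apply, hApow,
          Matrix.diagonal_apply_ne _ hab, hA', Matrix.diagonal_apply_ne _ hab]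
        simp
    have hX2 : Matrix.diagonal (fun i => X i i) ∈ Submodule.span ℝ
        ({M | ∃ i j : Fin (2 * p + 1), i < j ∧
            M = (Real.sqrt 2)⁻¹ •
              (Matrix.single i j 1 + Matrix.single j i 1)} ∪
         {M | ∃ α, 1 ≤ α ∧ α ≤ p - 1 ∧
            M = A ^ (2 * α + 1) - Matrix.trace (A ^ (2 * α + 2)) • A}) := by
      rw [hdiag]
      apply Submodule.sum_mem
      intro β hβ
      apply Submodule.smul_mem
      apply Submodule.subset_span
      right
      refine ⟨(β:ℕ), ?_, ?_, rfl⟩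
      · have hne : β ≠ i0 := (Finset.mem_erase.1 hβ).1
        have : (β:ℕ) ≠ 0 := by
          intro h
          exact hne (Fin.ext (by rw [h, hi0]))
        omega
      · have := β.isLt
        omega
    have hX1 : X - Matrix.diagonal (fun i => X i i) ∈ Submodule.span ℝ
        ({M | ∃ i j : Fin (2 * p + 1), i < j ∧
            M = (Real.sqrt 2)⁻¹ •
              (Matrix.single i j 1 + Matrix.single j i 1)} ∪
         {M | ∃ α, 1 ≤ α ∧ α ≤ p - 1 ∧
            M = A ^ (2 * α + 1) - Matrix.trace (A ^ (2 * α + 2)) • A}) := by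
      rw [sym_offdiag_decomp X hsym]
      apply Submodule.sum_mem
      rintro ⟨i, j⟩ hq
      rw [Finset.mem_filter] at hq
      have hgenmem : (Real.sqrt 2)⁻¹ •
            (Matrix.single i j (1:ℝ) + Matrix.single j i 1) ∈
          ({M | ∃ i j : Fin (2 * p + 1), i < j ∧
            M = (Real.sqrt 2)⁻¹ •
              (Matrix.single i j 1 + Matrix.single j i 1)} ∪
           {M | ∃ α, 1 ≤ α ∧ α ≤ p - 1 ∧
            M = A ^ (2 * α + 1) - Matrix.trace (A ^ (2 * α + 2)) • A}) :=
        Or.inl ⟨i, j, hq.2, rfl⟩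
      have hgen := Submodule.subset_span (R := ℝ) hgenmem
      have hrw : X i j • (Matrix.single i j (1:ℝ) + Matrix.single j i 1)
          = (Real.sqrt 2 * X i j) •
            ((Real.sqrt 2)⁻¹ • (Matrix.single i j (1:ℝ) + Matrix.single j i 1)) := by
        rw [smul_smul]
        congr 1
        rw [mul_comm (Real.sqrt 2), mul_assoc,
          mul_inv_cancel₀ (by positivity : Real.sqrt 2 ≠ 0), mul_one]
      rw [hrw]
      exact Submodule.smul_mem _ _ hgen
    have hfin := Submodule.add_mem _ hX1 hX2
    rw [sub_add_cancel] at hfin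
    exact hfin
  · -- span is contained in the constraint set
    intro X hX
    have hle : Submodule.span ℝ
        ({M | ∃ i j : Fin (2 * p + 1), i < j ∧
            M = (Real.sqrt 2)⁻¹ •
              (Matrix.single i j 1 + Matrix.single j i 1)} ∪
         {M | ∃ α, 1 ≤ α ∧ α ≤ p - 1 ∧
            M = A ^ (2 * α + 1) - Matrix.trace (A ^ (2 * α + 2)) • A}) ≤ S := by
      rw [Submodule.span_le]
      rintro M (⟨i, j, hij, rfl⟩ | ⟨α, hα1, hα2, rfl⟩)
      · -- off-diagonal generators
        have hne : i ≠ j := ne_of_lt hij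
        have hne' : j ≠ i := (ne_of_lt hij).symm
        have htrE : ∀ m : ℕ,
            Matrix.trace ((Matrix.single i j (1:ℝ) + Matrix.single j i 1) * A ^ m) = 0 := by
          intro m
          rw [hApow m, add_mul, Matrix.trace_add, trE _ _ _ hne _, trE _ _ _ hne' _, add_zero]
        refine ⟨?_, ?_, ?_, ?_⟩
        · rw [Matrix.transpose_smul, Matrix.transpose_add, stdBasis_transpose,
            stdBasis_transpose,
            add_comm (Matrix.single j i (1:ℝ)) (Matrix.single i j 1)]
        · rw [Matrix.trace_smul, Matrix.trace_add, Matrix.trace_single_eq_of_ne (h := hne),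
            Matrix.trace_single_eq_of_ne (h := hne'), add_zero, smul_zero]
        · have h := htrE 1
          rw [pow_one] at h
          rw [Matrix.smul_mul, Matrix.trace_smul, h, smul_zero]
        · intro α _ _
          rw [Matrix.smul_mul, Matrix.trace_smul, htrE (2*α), smul_zero]
      · -- diagonal generators
        have hodd : ∀ m : ℕ, Matrix.trace (A ^ (2 * m + 1)) = 0 := by
          intro m; rw [htrm, T_odd]
        refine ⟨?_, ?_, ?_, ?_⟩
        · rw [Matrix.transpose_sub, Matrix.transpose_smul, Matrix.transpose_pow, hAt]
        · have htrA : Matrix.trace A = 0 := by simpa using hodd 0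
          rw [Matrix.trace_sub, Matrix.trace_smul, hodd α, htrA, smul_zero, sub_zero]
        · rw [sub_mul, Matrix.smul_mul, Matrix.trace_sub, Matrix.trace_smul,
            ← pow_succ, ← sq, htrm, htrm, hT2, smul_eq_mul, mul_one,
            show 2*α+1+1 = 2*α+2 from rfl, sub_self]
        · intro β hβ1 hβ2
          rw [sub_mul, Matrix.smul_mul, Matrix.trace_sub, Matrix.trace_smul,
            ← pow_add, show A * A ^ (2*β) = A ^ (2*β+1) from (pow_succ' A (2*β)).symm,
            show 2*α+1+2*β = 2*(α+β)+1 by ring, hodd (α+β), hodd β, smul_zero, sub_zero]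
    exact hle hX
end

section
/- Let n = 2p+2 with p ≥ 1 and let A = diag(λ₁, −λ₁, λ₂, −λ₂, …, λ_{p+1}, −λ_{p+1}) be the n×n diagonal matrix with λ₁ > λ₂ > … > λ_{p+1} > 0 and 2(λ₁² + … + λ_{p+1}²) = 1. Then the subspace {X an n×n real symmetric matrix : tr X = 0, tr(XA) = 0, and tr(X A^{2α}) = 0 for all 1 ≤ α ≤ p} is exactly the ℝ-linear span of the set {Ê_{ij} : 1 ≤ i < j ≤ n} ∪ {X_α(A) : 1 ≤ α ≤ p}. -/
open Matrix

private def dvec (p : ℕ) (lam : Fin (p+1) → ℝ) : Fin (2*p+2) → ℝ :=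
  fun i => (-1:ℝ)^((i:ℕ)%2) * lam ⟨(i:ℕ)/2, Nat.div_lt_of_lt_mul (by omega)⟩

private lemma dvec_even (p : ℕ) (lam : Fin (p+1) → ℝ) (i : Fin (p+1)) (h : 2*(i:ℕ) < 2*p+2) :
    dvec p lam ⟨2*(i:ℕ), h⟩ = lam i := by
  have h1 : (2*(i:ℕ)) % 2 = 0 := by omega
  have h2 : (2*(i:ℕ)) / 2 = (i:ℕ) := by omega
  simp [dvec, h1, h2]

private lemma dvec_odd (p : ℕ) (lam : Fin (p+1) → ℝ) (i : Fin (p+1)) (h : 2*(i:ℕ)+1 < 2*p+2) :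
    dvec p lam ⟨2*(i:ℕ)+1, h⟩ = - lam i := by
  have h1 : (2*(i:ℕ)+1) % 2 = 1 := by omega
  have h2 : (2*(i:ℕ)+1) / 2 = (i:ℕ) := by omega
  simp [dvec, h1, h2]

private lemma pair_sum (p : ℕ) (F : Fin (2*p+2) → ℝ) :
    ∑ k, F k = ∑ i : Fin (p+1), (F ⟨2*(i:ℕ), by omega⟩ + F ⟨2*(i:ℕ)+1, by omega⟩) := by
  have hb : Function.Bijective
      (fun q : Fin (p+1) × Fin 2 => (⟨2*(q.1:ℕ)+(q.2:ℕ), by omega⟩ : Fin (2*p+2))) := by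
    rw [Fintype.bijective_iff_injective_and_card]
    constructor
    · rintro ⟨i, s⟩ ⟨j, t⟩ h
      simp only [Fin.mk.injEq] at h
      have hs := s.isLt; have ht := t.isLt
      have h1 : (i:ℕ) = j ∧ (s:ℕ) = t := by omega
      simp only [Prod.mk.injEq, Fin.ext_iff]
      exact h1
    · simp; ring
  rw [← Fintype.sum_bijective _ hb _ F (fun q => rfl), Fintype.sum_prod_type]
  refine Finset.sum_congr rfl fun i _ => ?_
  rw [Fin.sum_univ_two]
  congr 1

-- trace of X * (diagonal dvec)^m
private lemma trace_mul_diag_pow (p : ℕ) (lam : Fin (p+1) → ℝ)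
    (X : Matrix (Fin (2*p+2)) (Fin (2*p+2)) ℝ) (m : ℕ) :
    Matrix.trace (X * (Matrix.diagonal (dvec p lam))^m) =
      ∑ i : Fin (p+1), (X.diag ⟨2*(i:ℕ), by omega⟩ * lam i ^ m
        + X.diag ⟨2*(i:ℕ)+1, by omega⟩ * (-lam i)^m) := by
  rw [Matrix.diagonal_pow]
  have h1 : Matrix.trace (X * Matrix.diagonal ((dvec p lam)^m))
      = ∑ b, X.diag b * ((dvec p lam)^m) b := by
    simp [Matrix.trace, Matrix.diag, Matrix.mul_diagonal]
  rw [h1, pair_sum p]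
  refine Finset.sum_congr rfl fun i _ => ?_
  rw [Pi.pow_apply, Pi.pow_apply, dvec_even, dvec_odd]

private lemma trace_diag_pow (p : ℕ) (lam : Fin (p+1) → ℝ) (m : ℕ) :
    Matrix.trace ((Matrix.diagonal (dvec p lam))^m)
      = ∑ i : Fin (p+1), (lam i ^ m + (-lam i)^m) := by
  rw [Matrix.diagonal_pow, Matrix.trace_diagonal, pair_sum p]
  refine Finset.sum_congr rfl fun i _ => ?_
  rw [Pi.pow_apply, Pi.pow_apply, dvec_even, dvec_odd]

private lemma trace_odd (p : ℕ) (lam : Fin (p+1) → ℝ) (m : ℕ) :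
    Matrix.trace ((Matrix.diagonal (dvec p lam))^(2*m+1)) = 0 := by
  rw [trace_diag_pow]
  apply Finset.sum_eq_zero
  intro i _
  rw [Odd.neg_pow ⟨m, by ring⟩]
  ring

private lemma trace_even (p : ℕ) (lam : Fin (p+1) → ℝ) (m : ℕ) :
    Matrix.trace ((Matrix.diagonal (dvec p lam))^(2*m))
      = 2 * ∑ i : Fin (p+1), lam i ^ (2*m) := by
  rw [trace_diag_pow, Finset.mul_sum]
  refine Finset.sum_congr rfl fun i _ => ?_
  rw [Even.neg_pow ⟨m, by ring⟩]
  ring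

private lemma trace_std_mul_diag {n : Type*} [Fintype n] [DecidableEq n]
    (i j : n) (hij : i ≠ j) (w : n → ℝ) :
    Matrix.trace (Matrix.single i j 1 * Matrix.diagonal w) = 0 := by
  rw [Matrix.trace]
  apply Finset.sum_eq_zero
  intro b _
  rw [Matrix.diag_apply, Matrix.mul_diagonal,
    Matrix.single_apply_of_ne (i := i) (j := j) (i' := b) (j' := b) (c := (1:ℝ)) (by rintro ⟨rfl, rfl⟩; exact hij rfl)]
  ring

private lemma std_symm {n : Type*} [DecidableEq n] (i j : n) :
    (Matrix.single i j (1:ℝ) + Matrix.single j i 1)ᵀ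
      = Matrix.single i j 1 + Matrix.single j i 1 := by
  ext a b
  simp only [Matrix.transpose_apply, Matrix.add_apply, Matrix.single, Matrix.of_apply]
  by_cases h1 : i = a <;> by_cases h2 : j = b <;> by_cases h3 : j = a <;> by_cases h4 : i = b <;>
    simp [h1, h2, h3, h4] <;> first | rfl | (try simp_all) <;> try ring

private lemma vand_zero {m : ℕ} (μ : Fin m → ℝ) (hμ : Function.Injective μ)
    (u : Fin m → ℝ) (h : ∀ α : Fin m, ∑ i, u i * μ i ^ (α : ℕ) = 0) : u = 0 := by
  apply Matrix.eq_zero_of_mulVec_eq_zero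
    (M := (Matrix.vandermonde μ)ᵀ)
    (by rw [Matrix.det_transpose]; exact Matrix.det_vandermonde_ne_zero_iff.mpr hμ)
  funext α
  simpa [Matrix.mulVec, Matrix.vandermonde, dotProduct, mul_comm] using h α

private lemma odd_pow_span {m : ℕ} (lam : Fin m → ℝ)
    (hinj : Function.Injective fun i => lam i ^ 2)
    (hne : ∀ i, lam i ≠ 0) (v : Fin m → ℝ) :
    ∃ c : Fin m → ℝ, ∀ i, v i = ∑ α : Fin m, c α * lam i ^ (2 * (α:ℕ) + 1) := by
  set M : Matrix (Fin m) (Fin m) ℝ := Matrix.of fun i α => lam i ^ (2*(α:ℕ)+1) with hM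
  have hMdet : M.det ≠ 0 := by
    have hfac : M = Matrix.diagonal lam * Matrix.vandermonde (fun i => lam i ^ 2) := by
      ext i α
      simp only [hM, Matrix.of_apply, Matrix.diagonal_mul, Matrix.vandermonde]
      ring
    rw [hfac, Matrix.det_mul, Matrix.det_diagonal]
    exact mul_ne_zero (Finset.prod_ne_zero_iff.mpr fun i _ => hne i)
      (Matrix.det_vandermonde_ne_zero_iff.mpr hinj)
  have h1 : M *ᵥ (M⁻¹ *ᵥ v) = v := by
    rw [Matrix.mulVec_mulVec, Matrix.mul_nonsing_inv _ (isUnit_iff_ne_zero.mpr hMdet),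
      Matrix.one_mulVec]
  refine ⟨M⁻¹ *ᵥ v, fun i => ?_⟩
  conv_lhs => rw [← h1]
  simp [Matrix.mulVec, dotProduct, hM, mul_comm]

/-- tangent space of `B_{n,ℝ}` at a diagonal point, even regular case
`n = 2p+2` with all `λ_i > 0`. -/
theorem tangent_space_even_regular_case (p : ℕ) (hp : 1 ≤ p) (lam : Fin (p + 1) → ℝ)
    (hanti : StrictAnti lam) (hpos : ∀ i, 0 < lam i)
    (hsum : 2 * ∑ i, lam i ^ 2 = 1)
    (A : Matrix (Fin (2 * p + 2)) (Fin (2 * p + 2)) ℝ)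
    (hA : A = Matrix.diagonal (fun i : Fin (2 * p + 2) =>
      (-1 : ℝ) ^ ((i : ℕ) % 2) * lam ⟨(i : ℕ) / 2, by omega⟩)) :
    {X : Matrix (Fin (2 * p + 2)) (Fin (2 * p + 2)) ℝ |
        Xᵀ = X ∧ Matrix.trace X = 0 ∧ Matrix.trace (X * A) = 0 ∧
          ∀ α, 1 ≤ α → α ≤ p → Matrix.trace (X * A ^ (2 * α)) = 0} =
      ↑(Submodule.span ℝ
        ({M | ∃ i j : Fin (2 * p + 2), i < j ∧
            M = (Real.sqrt 2)⁻¹ •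
              (Matrix.single i j 1 + Matrix.single j i 1)} ∪
         {M | ∃ α, 1 ≤ α ∧ α ≤ p ∧
            M = A ^ (2 * α + 1) - Matrix.trace (A ^ (2 * α + 2)) • A})) := by
  have hAd : A = Matrix.diagonal (dvec p lam) := hA
  clear hA
  have hs2 : Real.sqrt 2 ≠ 0 := ne_of_gt (Real.sqrt_pos.mpr (by norm_num))
  set Sp := Submodule.span ℝ
        ({M | ∃ i j : Fin (2 * p + 2), i < j ∧
            M = (Real.sqrt 2)⁻¹ •
              (Matrix.single i j 1 + Matrix.single j i 1)} ∪
         {M : Matrix (Fin (2*p+2)) (Fin (2*p+2)) ℝ | ∃ α, 1 ≤ α ∧ α ≤ p ∧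
            M = A ^ (2 * α + 1) - Matrix.trace (A ^ (2 * α + 2)) • A}) with hSp
  have hsq : StrictAnti (fun i => lam i ^ 2) := by
    intro i j hij
    exact pow_lt_pow_left₀ (hanti hij) (hpos j).le (by norm_num)
  have hS : ∀ m : ℕ, Matrix.trace ((Matrix.diagonal (dvec p lam))^(2*m+2))
      = 2 * ∑ i, lam i ^ (2*m+2) := by
    intro m
    have h := trace_even p lam (m+1)
    rw [show 2*(m+1) = 2*m+2 by omega] at h
    exact h
  have htrA : Matrix.trace (Matrix.diagonal (dvec p lam)) = 0 := by
    have h := trace_odd p lam 0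
    norm_num at h
    rw [Matrix.trace_diagonal]; exact h
  ext X
  simp only [Set.mem_setOf_eq, SetLike.mem_coe]
  constructor
  · rintro ⟨hsym, htr0, htr1, htr2⟩
    -- symmetric off-diagonal facts
    have hsym' : ∀ i j, X j i = X i j := fun i j => congrFun (congrFun hsym i) j
    set d := Matrix.diag X with hd
    set Y := X - Matrix.diagonal d with hYdef
    have hYsymm : ∀ i j, Y j i = Y i j := by
      intro i j
      rcases eq_or_ne i j with rfl | hij
      · rfl
      · simp [hYdef, Matrix.sub_apply, Matrix.diagonal_apply_ne _ hij,
          Matrix.diagonal_apply_ne _ (Ne.symm hij), hsym' i j]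
    have hYdiag : ∀ i, Y i i = 0 := by
      intro i
      simp [hYdef, Matrix.sub_apply, hd, Matrix.diag_apply]
    have gen1 : ∀ i j : Fin (2*p+2), i ≠ j →
        Matrix.single i j (1:ℝ) + Matrix.single j i 1 ∈ Sp := by
      intro i j hij
      have key : ∀ a b : Fin (2*p+2), a < b →
          Matrix.single a b (1:ℝ) + Matrix.single b a 1 ∈ Sp := by
        intro a b hab
        have e : Matrix.single a b (1:ℝ) + Matrix.single b a 1
            = Real.sqrt 2 • ((Real.sqrt 2)⁻¹ •
              (Matrix.single a b (1:ℝ) + Matrix.single b a 1)) := by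
          rw [smul_smul, mul_inv_cancel₀ hs2, one_smul]
        rw [e]
        exact Submodule.smul_mem _ _ (Submodule.subset_span (Or.inl ⟨a, b, hab, rfl⟩))
      rcases hij.lt_or_gt with h | h
      · exact key i j h
      · simpa [add_comm] using key j i h
    have hYmem : Y ∈ Sp := by
      have hYeq : Y = (2⁻¹:ℝ) • ∑ i, ∑ j,
          (Matrix.single i j (Y i j) + Matrix.single j i (Y j i)) := by
        have e1 : ∑ i, ∑ j, Matrix.single i j (Y i j) = Y :=
          (Matrix.matrix_eq_sum_single Y).symm
        have e2 : ∑ i : Fin (2*p+2), ∑ j : Fin (2*p+2),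
            Matrix.single j i (Y j i) = Y := by
          rw [Finset.sum_comm]
          exact e1
        simp only [Finset.sum_add_distrib, e1, e2]
        rw [← two_smul ℝ Y, smul_smul]
        norm_num
      rw [hYeq]
      refine Submodule.smul_mem _ _ (Submodule.sum_mem _ fun i _ =>
        Submodule.sum_mem _ fun j _ => ?_)
      rcases eq_or_ne i j with rfl | hij
      · rw [hYdiag]
        simp
      · have e : Matrix.single i j (Y i j) + Matrix.single j i (Y j i)
            = Y i j • (Matrix.single i j (1:ℝ) + Matrix.single j i 1) := by
          rw [smul_add, Matrix.smul_single, Matrix.smul_single,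
            smul_eq_mul, mul_one, hYsymm]
        rw [e]
        exact Submodule.smul_mem _ _ (gen1 i j hij)
    -- diagonal part analysis
    have htrd : ∀ m : ℕ, Matrix.trace (X * (Matrix.diagonal (dvec p lam))^m)
        = ∑ i : Fin (p+1), (d ⟨2*(i:ℕ), by omega⟩ * lam i ^ m
          + d ⟨2*(i:ℕ)+1, by omega⟩ * (-lam i)^m) := fun m => trace_mul_diag_pow p lam X m
    have hu0 : (fun i : Fin (p+1) => d ⟨2*(i:ℕ), by omega⟩ + d ⟨2*(i:ℕ)+1, by omega⟩) = 0 := by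
      apply vand_zero (fun i => lam i ^ 2) hsq.injective
      intro α
      by_cases h0 : (α:ℕ) = 0
      · simp only [h0, pow_zero, mul_one]
        have e : Matrix.trace X = ∑ i : Fin (p+1),
            (d ⟨2*(i:ℕ), by omega⟩ + d ⟨2*(i:ℕ)+1, by omega⟩) := by
          rw [Matrix.trace, pair_sum p]
        rw [← e]
        exact htr0
      · have h1 : 1 ≤ (α:ℕ) := by omega
        have h2 : (α:ℕ) ≤ p := by have := α.isLt; omega
        have hc := htr2 (α:ℕ) h1 h2
        rw [hAd, htrd (2*(α:ℕ))] at hc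
        rw [← hc]
        refine Finset.sum_congr rfl fun i _ => ?_
        rw [Even.neg_pow ⟨(α:ℕ), by omega⟩, ← pow_mul]
        ring
    have hneg : ∀ i : Fin (p+1), d ⟨2*(i:ℕ)+1, by omega⟩ = - d ⟨2*(i:ℕ), by omega⟩ := by
      intro i
      have h := congrFun hu0 i
      simp only [Pi.zero_apply] at h
      linarith
    set v : Fin (p+1) → ℝ := fun i => d ⟨2*(i:ℕ), by omega⟩ with hv
    have hvlam : ∑ i, v i * lam i = 0 := by
      have hc := htr1
      rw [hAd, show Matrix.diagonal (dvec p lam) = (Matrix.diagonal (dvec p lam))^1 from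
        (pow_one _).symm, htrd 1] at hc
      have e : ∑ i : Fin (p+1), (d ⟨2*(i:ℕ), by omega⟩ * lam i ^ 1
          + d ⟨2*(i:ℕ)+1, by omega⟩ * (-lam i)^1) = 2 * ∑ i, v i * lam i := by
        rw [Finset.mul_sum]
        refine Finset.sum_congr rfl fun i _ => ?_
        rw [hneg i]
        simp only [hv, pow_one]
        ring
      rw [e] at hc
      linarith
    have hne0 : ∀ i, lam i ≠ 0 := fun i => (hpos i).ne'
    obtain ⟨c, hcc⟩ := odd_pow_span lam hsq.injective hne0 v
    have hc0 : c 0 * (∑ i, lam i ^ 2)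
        + ∑ β : Fin p, c β.succ * (∑ i, lam i ^ (2*(β:ℕ)+4)) = 0 := by
      have h1 : ∑ i, v i * lam i = ∑ α : Fin (p+1), c α * (∑ i, lam i ^ (2*(α:ℕ)+2)) :=
        calc ∑ i, v i * lam i
            = ∑ i, ∑ α : Fin (p+1), c α * lam i ^ (2*(α:ℕ)+2) := by
              refine Finset.sum_congr rfl fun i _ => ?_
              rw [hcc i, Finset.sum_mul]
              refine Finset.sum_congr rfl fun α _ => ?_
              ring
          _ = ∑ α : Fin (p+1), c α * (∑ i, lam i ^ (2*(α:ℕ)+2)) := by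
              rw [Finset.sum_comm]
              refine Finset.sum_congr rfl fun α _ => ?_
              rw [Finset.mul_sum]
      rw [h1, Fin.sum_univ_succ] at hvlam
      have e2 : ∀ β : Fin p, c β.succ * (∑ i, lam i ^ (2*((β.succ : Fin (p+1)):ℕ)+2))
          = c β.succ * (∑ i, lam i ^ (2*(β:ℕ)+4)) := by
        intro β
        have hval : ((β.succ : Fin (p+1)):ℕ) = (β:ℕ)+1 := rfl
        rw [hval, show 2*((β:ℕ)+1)+2 = 2*(β:ℕ)+4 by omega]
      rw [Finset.sum_congr rfl (fun β _ => e2 β)] at hvlam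
      rw [show (2*((0 : Fin (p+1)):ℕ)+2) = 2 by simp] at hvlam
      exact hvlam
    have hkey : ∀ i : Fin (p+1), v i = ∑ β : Fin p, c β.succ *
        (lam i ^ (2*((β:ℕ)+1)+1)
          - Matrix.trace ((Matrix.diagonal (dvec p lam)) ^ (2*((β:ℕ)+1)+2)) * lam i) := by
      intro i
      have e1 := hcc i
      rw [Fin.sum_univ_succ] at e1
      have e2 : ∀ β : Fin p, c β.succ * lam i ^ (2*((β.succ : Fin (p+1)):ℕ)+1)
          = c β.succ * lam i ^ (2*(β:ℕ)+3) := by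
        intro β
        have hval : ((β.succ : Fin (p+1)):ℕ) = (β:ℕ)+1 := rfl
        rw [hval, show 2*((β:ℕ)+1)+1 = 2*(β:ℕ)+3 by omega]
      rw [Finset.sum_congr rfl (fun β _ => e2 β),
        show (2*((0 : Fin (p+1)):ℕ)+1) = 1 by simp, pow_one] at e1
      have e3 : ∀ β : Fin p, c β.succ *
          (lam i ^ (2*((β:ℕ)+1)+1)
            - Matrix.trace ((Matrix.diagonal (dvec p lam)) ^ (2*((β:ℕ)+1)+2)) * lam i)
          = c β.succ * lam i ^ (2*(β:ℕ)+3)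
            - (c β.succ * (∑ j, lam j ^ (2*(β:ℕ)+4))) * (2 * lam i) := by
        intro β
        rw [hS ((β:ℕ)+1)]
        rw [show 2*((β:ℕ)+1)+2 = 2*(β:ℕ)+4 by omega,
          show 2*((β:ℕ)+1)+1 = 2*(β:ℕ)+3 by omega]
        ring
      rw [Finset.sum_congr rfl (fun β _ => e3 β), Finset.sum_sub_distrib, ← Finset.sum_mul]
      rw [e1]
      linear_combination (2 * lam i) * hc0 - (c 0 * lam i) * hsum
    have hmain : ∀ k : Fin (2*p+2), d k = ∑ β : Fin p, c β.succ *
        ((dvec p lam k) ^ (2*((β:ℕ)+1)+1)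
          - Matrix.trace ((Matrix.diagonal (dvec p lam)) ^ (2*((β:ℕ)+1)+2)) * dvec p lam k) := by
      rintro ⟨kv, hkv⟩
      rcases Nat.mod_two_eq_zero_or_one kv with hpar | hpar
      · have hlt : kv / 2 < p + 1 := by omega
        have e : (⟨kv, hkv⟩ : Fin (2*p+2)) = ⟨2*((⟨kv/2, hlt⟩ : Fin (p+1)):ℕ), by omega⟩ := by
          apply Fin.ext
          show kv = 2*(kv/2)
          omega
        rw [e, dvec_even]
        exact hkey ⟨kv/2, hlt⟩
      · have hlt : kv / 2 < p + 1 := by omega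
        have e : (⟨kv, hkv⟩ : Fin (2*p+2)) = ⟨2*((⟨kv/2, hlt⟩ : Fin (p+1)):ℕ)+1, by omega⟩ := by
          apply Fin.ext
          show kv = 2*(kv/2)+1
          omega
        rw [e, dvec_odd, hneg ⟨kv/2, hlt⟩]
        have e4 : ∀ β : Fin p, c β.succ *
            ((- lam ⟨kv/2, hlt⟩) ^ (2*((β:ℕ)+1)+1)
              - Matrix.trace ((Matrix.diagonal (dvec p lam)) ^ (2*((β:ℕ)+1)+2))
                * (- lam ⟨kv/2, hlt⟩))
            = -(c β.succ * (lam ⟨kv/2, hlt⟩ ^ (2*((β:ℕ)+1)+1)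
              - Matrix.trace ((Matrix.diagonal (dvec p lam)) ^ (2*((β:ℕ)+1)+2))
                * lam ⟨kv/2, hlt⟩)) := by
          intro β
          rw [Odd.neg_pow ⟨(β:ℕ)+1, by omega⟩]
          ring
        rw [Finset.sum_congr rfl (fun β _ => e4 β), Finset.sum_neg_distrib, ← hkey ⟨kv/2, hlt⟩]
    have hD : Matrix.diagonal d = ∑ β : Fin p, c β.succ •
        ((Matrix.diagonal (dvec p lam)) ^ (2*((β:ℕ)+1)+1)
          - Matrix.trace ((Matrix.diagonal (dvec p lam)) ^ (2*((β:ℕ)+1)+2))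
            • Matrix.diagonal (dvec p lam)) := by
      have step : ∀ β : Fin p, (c β.succ •
          ((Matrix.diagonal (dvec p lam)) ^ (2*((β:ℕ)+1)+1)
            - Matrix.trace ((Matrix.diagonal (dvec p lam)) ^ (2*((β:ℕ)+1)+2))
              • Matrix.diagonal (dvec p lam)))
          = Matrix.diagonal (fun k => c β.succ * ((dvec p lam k) ^ (2*((β:ℕ)+1)+1)
              - Matrix.trace ((Matrix.diagonal (dvec p lam)) ^ (2*((β:ℕ)+1)+2))
                * dvec p lam k)) := by
        intro β
        rw [Matrix.diagonal_pow, ← Matrix.diagonal_smul, Matrix.diagonal_sub,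
          ← Matrix.diagonal_smul]
        congr 1
      ext k l
      rw [Matrix.sum_apply]
      simp only [step]
      rcases eq_or_ne k l with rfl | hkl
      · simp only [Matrix.diagonal_apply_eq]
        exact hmain k
      · simp [Matrix.diagonal_apply_ne _ hkl]
    have hXeq : X = Y + Matrix.diagonal d := by
      rw [hYdef]
      exact (sub_add_cancel X _).symm
    rw [hXeq]
    refine Submodule.add_mem _ hYmem ?_
    rw [hD, ← hAd]
    refine Submodule.sum_mem _ fun β _ => Submodule.smul_mem _ _
      (Submodule.subset_span (Or.inr ⟨(β:ℕ)+1, by omega, by have := β.isLt; omega, rfl⟩))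
  · intro hX
    refine Submodule.span_induction ?_ ?_ ?_ ?_ hX
    · rintro M (⟨i, j, hij, rfl⟩ | ⟨α, hα1, hα2, rfl⟩)
      · refine ⟨by rw [Matrix.transpose_smul, std_symm], ?_, ?_, ?_⟩
        · rw [Matrix.trace_smul, Matrix.trace_add,
            Matrix.trace_single_eq_of_ne (h := ne_of_lt hij),
            Matrix.trace_single_eq_of_ne (h := ne_of_gt hij)]
          simp
        · rw [hAd, smul_mul_assoc, add_mul, Matrix.trace_smul, Matrix.trace_add,
            trace_std_mul_diag i j (ne_of_lt hij), trace_std_mul_diag j i (ne_of_gt hij)]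
          simp
        · intro α _ _
          rw [hAd, Matrix.diagonal_pow, smul_mul_assoc, add_mul, Matrix.trace_smul,
            Matrix.trace_add, trace_std_mul_diag i j (ne_of_lt hij),
            trace_std_mul_diag j i (ne_of_gt hij)]
          simp
      · rw [hAd]
        refine ⟨?_, ?_, ?_, ?_⟩
        · rw [Matrix.transpose_sub, Matrix.transpose_smul, Matrix.transpose_pow,
            Matrix.diagonal_transpose]
        · rw [Matrix.trace_sub, Matrix.trace_smul, trace_odd p lam α, htrA]
          simp
        · rw [sub_mul, smul_mul_assoc, Matrix.trace_sub, Matrix.trace_smul, ← pow_succ]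
          obtain ⟨α', rfl⟩ : ∃ α', α = α' + 1 := ⟨α - 1, by omega⟩
          rw [show 2*(α'+1)+1+1 = 2*α'+4 by omega]
          have h2 : Matrix.diagonal (dvec p lam) * Matrix.diagonal (dvec p lam)
              = (Matrix.diagonal (dvec p lam))^2 := (sq _).symm
          rw [h2]
          have h3 := hS 0
          norm_num at h3
          rw [h3, show (2:ℝ) * ∑ i, lam i ^ 2 = 1 from hsum]
          simp
        · intro γ hγ1 hγ2
          rw [Matrix.diagonal_pow]
          rw [← Matrix.diagonal_pow]
          rw [sub_mul, smul_mul_assoc, Matrix.trace_sub, Matrix.trace_smul, ← pow_add]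
          rw [show 2*α+1+2*γ = 2*(α+γ)+1 by omega, trace_odd p lam (α+γ)]
          have h4 : Matrix.diagonal (dvec p lam) * (Matrix.diagonal (dvec p lam))^(2*γ)
              = (Matrix.diagonal (dvec p lam))^(2*γ+1) := by
            rw [← pow_succ']
          rw [h4, trace_odd p lam γ]
          simp
    · exact ⟨Matrix.transpose_zero, by simp, by simp, fun α _ _ => by simp⟩
    · rintro M N - - ⟨m1, m2, m3, m4⟩ ⟨n1, n2, n3, n4⟩
      refine ⟨by rw [Matrix.transpose_add, m1, n1], by rw [Matrix.trace_add, m2, n2, add_zero],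
        by rw [add_mul, Matrix.trace_add, m3, n3, add_zero], fun α h1 h2 => ?_⟩
      rw [add_mul, Matrix.trace_add, m4 α h1 h2, n4 α h1 h2, add_zero]
    · rintro r M - ⟨m1, m2, m3, m4⟩
      refine ⟨by rw [Matrix.transpose_smul, m1], by rw [Matrix.trace_smul, m2, smul_zero],
        by rw [smul_mul_assoc, Matrix.trace_smul, m3, smul_zero], fun α h1 h2 => ?_⟩
      rw [smul_mul_assoc, Matrix.trace_smul, m4 α h1 h2, smul_zero]
end

section
/- Let n ≥ 3, p = ⌊(n−1)/2⌋, and let A ∈ B_{n,ℝ}. For 1 ≤ α ≤ p set ρ_α := (2α+1)·‖A^{2α} − (1/n)·tr(A^{2α})·I_n‖ (which is positive), and let S_α : T_A → T_A be the unique linear endomorphism such that ⟨S_α X, Y⟩ = −((2α+1)/ρ_α) · Σ_{r=0}^{2α−1} tr(X A^r Y A^{2α−1−r}) for all X, Y ∈ T_A (this is well defined because the right-hand side is a symmetric bilinear form on T_A; S_α is the shape operator of B_{n,ℝ} in the α-th unit normal direction). Then tr(S_α^q) = 0 for every odd positive integer q; equivalently, the multiset of eigenvalues of S_α is invariant under multiplication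 by −1. In particular B_{n,ℝ} is an austere submanifold of the unit sphere. -/
open Matrix



-- lemma 1: perm from multiset equality
lemma exists_perm_comp_eq {n : ℕ} {f g : Fin n → ℝ}
    (h : Multiset.map f Finset.univ.val = Multiset.map g Finset.univ.val) :
    ∃ σ : Equiv.Perm (Fin n), f ∘ σ = g := by
  have hperm : (List.ofFn f).Perm (List.ofFn g) := by
    rw [← Multiset.coe_eq_coe]
    rw [Fin.univ_val_map, Fin.univ_val_map] at h
    exact_mod_cast h
  have h1 : (List.ofFn (f ∘ Tuple.sort f)).Perm (List.ofFn (g ∘ Tuple.sort g)) :=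
    (((Tuple.sort f).ofFn_comp_perm f).trans hperm).trans
      ((Tuple.sort g).ofFn_comp_perm g).symm
  have h2 : List.ofFn (f ∘ Tuple.sort f) = List.ofFn (g ∘ Tuple.sort g) :=
    List.Perm.eq_of_sortedLE (Tuple.monotone_sort f).sortedLE_ofFn
      (Tuple.monotone_sort g).sortedLE_ofFn h1
  have h3 : f ∘ Tuple.sort f = g ∘ Tuple.sort g := List.ofFn_injective h2
  refine ⟨(Tuple.sort g).symm.trans (Tuple.sort f), ?_⟩
  funext i
  have := congrFun h3 ((Tuple.sort g).symm i)
  simpa using this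



lemma esymm_odd_eq_zero {n : ℕ} (μ : Fin n → ℝ)
    (h : ∀ m, Odd m → m ≤ n → ∑ i, μ i ^ m = 0) :
    ∀ k, Odd k → (Multiset.map μ Finset.univ.val).esymm k = 0 := by
  intro k hk
  induction k using Nat.strong_induction_on with
  | _ k ih =>
    rcases le_or_gt k n with hkn | hkn
    · have hnewton := congrArg (MvPolynomial.aeval μ) (MvPolynomial.mul_esymm_eq_sum (Fin n) ℝ k)
      simp only [_root_.map_mul, map_natCast, _root_.map_pow, map_neg, _root_.map_one, map_sum,
        MvPolynomial.aeval_esymm_eq_multiset_esymm] at hnewton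
      have hpsum : ∀ m, MvPolynomial.aeval μ (MvPolynomial.psum (Fin n) ℝ m) = ∑ i, μ i ^ m := by
        intro m; simp [MvPolynomial.psum]
      simp only [hpsum] at hnewton
      have hsum0 : ∑ x ∈ Finset.filter (fun a => a.1 < k) (Finset.HasAntidiagonal.antidiagonal k),
          (-1 : ℝ) ^ x.1 * (Multiset.map μ Finset.univ.val).esymm x.1 * ∑ i, μ i ^ x.2 = 0 := by
        apply Finset.sum_eq_zero
        rintro ⟨a, b⟩ hab
        simp only [Finset.mem_filter, Finset.HasAntidiagonal.mem_antidiagonal] at hab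
        obtain ⟨hab1, hab2⟩ := hab
        rcases Nat.even_or_odd a with ha | ha
        · have hb : Odd b := by
            rcases Nat.even_or_odd b with hb | hb
            · exfalso
              have : Even (a + b) := ha.add hb
              rw [hab1] at this
              exact (Nat.not_even_iff_odd.mpr hk) this
            · exact hb
          rw [h b hb (le_trans (le_trans (Nat.le_add_left b a) (le_of_eq hab1)) hkn)]
          ring
        · rw [ih a hab2 ha]; ring
      rw [hsum0, mul_zero] at hnewton
      have hk0 : (k : ℝ) ≠ 0 := Nat.cast_ne_zero.mpr hk.pos.ne'
      exact (mul_eq_zero.mp hnewton).resolve_left hk0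
    · rw [Finset.esymm_map_val, Finset.powersetCard_eq_empty.mpr (by simpa using hkn)]
      simp



open Polynomial in
lemma multiset_eq_neg_of_esymm_odd_zero {s : Multiset ℝ}
    (h : ∀ k, Odd k → s.esymm k = 0) : s.map (fun x => -x) = s := by
  have hcard : Multiset.card (s.map (fun x => -x)) = Multiset.card s := Multiset.card_map _ _
  have hesymm : ∀ k, (s.map (fun x => -x)).esymm k = s.esymm k := by
    intro k
    rw [show (fun x : ℝ => -x) = Neg.neg from rfl, Multiset.esymm_neg]
    rcases Nat.even_or_odd k with hk | hk
    · rw [hk.neg_one_pow, one_mul]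
    · rw [h k hk, mul_zero]
  have hpoly : ((s.map (fun x => -x)).map (fun t => X - C t)).prod =
      (s.map (fun t => X - C t)).prod := by
    ext k
    rcases le_or_gt k (Multiset.card s) with hk | hk
    · rw [Multiset.prod_X_sub_C_coeff _ (by rw [hcard]; exact hk),
        Multiset.prod_X_sub_C_coeff _ hk, hcard, hesymm]
    · rw [coeff_eq_zero_of_natDegree_lt, coeff_eq_zero_of_natDegree_lt]
      · rw [natDegree_multiset_prod_X_sub_C_eq_card]; exact hk
      · rw [natDegree_multiset_prod_X_sub_C_eq_card, hcard]; exact hk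
  calc s.map (fun x => -x) = ((s.map (fun x => -x)).map (fun t => X - C t)).prod.roots := by
        rw [roots_multiset_prod_X_sub_C]
    _ = (s.map (fun t => X - C t)).prod.roots := by rw [hpoly]
    _ = s := roots_multiset_prod_X_sub_C s

lemma exists_negating_orthogonal {n : ℕ} (A : Matrix (Fin n) (Fin n) ℝ)
    (hA : A.IsHermitian)
    (hodd : ∀ m, Odd m → m ≤ n → Matrix.trace (A ^ m) = 0) :
    ∃ ε : Matrix (Fin n) (Fin n) ℝ, ε * εᵀ = 1 ∧ εᵀ * ε = 1 ∧ ε * A * εᵀ = -A := by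
  classical
  set U : Matrix (Fin n) (Fin n) ℝ := (hA.eigenvectorUnitary : Matrix (Fin n) (Fin n) ℝ) with hU
  set μ : Fin n → ℝ := hA.eigenvalues with hμ
  have hU1 : star U * U = 1 := Unitary.coe_star_mul_self hA.eigenvectorUnitary
  have hU2 : U * star U = 1 := Unitary.coe_mul_star_self hA.eigenvectorUnitary
  have hspec : A = U * diagonal μ * star U := by
    have := hA.spectral_theorem
    simpa using this
  -- trace of powers
  have hApow : ∀ m, A ^ m = U * (diagonal μ) ^ m * star U := by
    intro m
    induction m with
    | zero => simp [hU2]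
    | succ m ih =>
      rw [pow_succ, ih, hspec, pow_succ]
      simp only [Matrix.mul_assoc]
      rw [← Matrix.mul_assoc (star U) U, hU1, Matrix.one_mul]
  have htr : ∀ m, Matrix.trace (A ^ m) = ∑ i, μ i ^ m := by
    intro m
    rw [hApow m, Matrix.trace_mul_cycle, hU1, Matrix.one_mul,
      Matrix.diagonal_pow, Matrix.trace_diagonal]
    simp
  -- power sums vanish
  have hps : ∀ m, Odd m → m ≤ n → ∑ i, μ i ^ m = 0 := by
    intro m hm hmn
    rw [← htr m]; exact hodd m hm hmn
  -- multiset symmetric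
  have hms : Multiset.map μ Finset.univ.val = Multiset.map (fun i => -μ i) Finset.univ.val := by
    have h1 := multiset_eq_neg_of_esymm_odd_zero
      (s := Multiset.map μ Finset.univ.val) (fun k hk => esymm_odd_eq_zero μ hps k hk)
    rw [← h1, Multiset.map_map]
    rfl
  obtain ⟨σ, hσ⟩ := exists_perm_comp_eq hms
  set U' : Matrix (Fin n) (Fin n) ℝ := U.submatrix _root_.id ⇑σ with hU'
  have hsU' : star U' = (star U).submatrix ⇑σ _root_.id := by
    rw [hU', Matrix.star_eq_conjTranspose, Matrix.star_eq_conjTranspose,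
      Matrix.conjTranspose_submatrix]
  refine ⟨U * star U', ?_, ?_, ?_⟩
  · have key : star U' * U' = 1 := by
      rw [hsU', hU']
      have := Matrix.submatrix_mul_equiv (star U) U ⇑σ (Equiv.refl (Fin n)) ⇑σ
      simp only [Equiv.coe_refl, Matrix.submatrix_id_id] at this
      rw [this, hU1, Matrix.submatrix_one_equiv]
    rw [← Matrix.conjTranspose_eq_transpose_of_trivial, Matrix.conjTranspose_mul]
    simp only [Matrix.star_eq_conjTranspose, Matrix.conjTranspose_conjTranspose] at key ⊢
    calc U * U'ᴴ * (U' * Uᴴ) = U * (U'ᴴ * U') * Uᴴ := by simp only [Matrix.mul_assoc]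
      _ = 1 := by
          rw [key, Matrix.mul_one]
          simpa only [Matrix.star_eq_conjTranspose] using hU2
  · have key : U' * star U' = 1 := by
      rw [hsU', hU']
      have := Matrix.submatrix_mul_equiv U (star U) _root_.id σ _root_.id
      rw [this, hU2, Matrix.submatrix_id_id]
    rw [← Matrix.conjTranspose_eq_transpose_of_trivial, Matrix.conjTranspose_mul]
    have hU1' : Uᴴ * U = 1 := by simpa only [Matrix.star_eq_conjTranspose] using hU1
    simp only [Matrix.star_eq_conjTranspose, Matrix.conjTranspose_conjTranspose] at key ⊢
    calc U' * Uᴴ * (U * U'ᴴ) = U' * (Uᴴ * U) * U'ᴴ := by simp only [Matrix.mul_assoc]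
      _ = 1 := by rw [hU1', Matrix.mul_one, key]
  · have hdiag : star U * A * U = diagonal μ := by
      have := hA.conjStarAlgAut_star_eigenvectorUnitary
      simpa using this
    have key : star U' * A * U' = -(diagonal μ) := by
      rw [hsU', hU']
      have e1 : (star U).submatrix ⇑σ _root_.id * A = (star U * A).submatrix ⇑σ _root_.id := by
        have := Matrix.submatrix_mul_equiv (star U) A ⇑σ (Equiv.refl (Fin n)) _root_.id
        simpa using this
      have e2 : (star U * A).submatrix ⇑σ _root_.id * U.submatrix _root_.id ⇑σ
          = (star U * A * U).submatrix ⇑σ ⇑σ := by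
        have := Matrix.submatrix_mul_equiv (star U * A) U ⇑σ (Equiv.refl (Fin n)) ⇑σ
        simpa using this
      rw [e1, e2, hdiag, Matrix.submatrix_diagonal_equiv]
      have : μ ∘ ⇑σ = fun i => -μ i := hσ
      rw [this]
      simp [Matrix.diagonal_neg]
    have : (U * star U') * A * star (U * star U') = U * (star U' * A * U') * star U := by
      simp only [Matrix.star_eq_conjTranspose, Matrix.conjTranspose_mul,
        Matrix.conjTranspose_conjTranspose, Matrix.mul_assoc]
    rw [← Matrix.conjTranspose_eq_transpose_of_trivial, ← Matrix.star_eq_conjTranspose, this,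
      key]
    rw [hspec]
    simp only [Matrix.mul_assoc, Matrix.neg_mul, Matrix.mul_neg]

/-- the shape operators of `B_{n,ℝ}` are austere: all odd-power
traces of the shape operator `S_α` vanish. -/
theorem shape_operator_austere (n : ℕ) (hn : 3 ≤ n) (p : ℕ) (hp : p = (n - 1) / 2)
    (A : Matrix (Fin n) (Fin n) ℝ) (hAsym : Aᵀ = A)
    (hA0 : Matrix.trace A = 0)
    (hA2 : Matrix.trace (A ^ 2) = 1)
    (hodd : ∀ k ≤ p, Matrix.trace (A ^ (2 * k + 1)) = 0)
    (hli : LinearIndependent ℝ (fun α : Fin (p + 1) => A ^ (2 * (α : ℕ))))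
    (T : Submodule ℝ (Matrix (Fin n) (Fin n) ℝ))
    (hT : ∀ X, X ∈ T ↔ (Xᵀ = X ∧ Matrix.trace X = 0 ∧ Matrix.trace (X * A) = 0 ∧
      ∀ α, 1 ≤ α → α ≤ p → Matrix.trace (X * A ^ (2 * α)) = 0))
    (α : ℕ) (hα1 : 1 ≤ α) (hα2 : α ≤ p)
    (ρ : ℝ)
    (hρ : ρ = (2 * α + 1) * Real.sqrt (Matrix.trace
      ((A ^ (2 * α) - (Matrix.trace (A ^ (2 * α)) / (n : ℝ)) • (1 : Matrix (Fin n) (Fin n) ℝ)) *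
       (A ^ (2 * α) - (Matrix.trace (A ^ (2 * α)) / (n : ℝ)) • (1 : Matrix (Fin n) (Fin n) ℝ)))))
    (S : Module.End ℝ T)
    (hS : ∀ X Y : T, Matrix.trace ((S X : Matrix (Fin n) (Fin n) ℝ) * (Y : Matrix (Fin n) (Fin n) ℝ)) =
      -((2 * α + 1) / ρ) * ∑ r ∈ Finset.range (2 * α),
        Matrix.trace ((X : Matrix (Fin n) (Fin n) ℝ) * A ^ r *
          (Y : Matrix (Fin n) (Fin n) ℝ) * A ^ (2 * α - 1 - r))) :
    ∀ q : ℕ, Odd q → LinearMap.trace ℝ T (S ^ q) = 0 := by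
  classical
  have hA' : A.IsHermitian := by
    rw [Matrix.IsHermitian, Matrix.conjTranspose_eq_transpose_of_trivial]; exact hAsym
  have hoddn : ∀ m, Odd m → m ≤ n → Matrix.trace (A ^ m) = 0 := by
    rintro m ⟨k, rfl⟩ hmn
    have hk : k ≤ p := by omega
    exact hodd k hk
  obtain ⟨ε, hε1, hε2, hε3⟩ := exists_negating_orthogonal A hA' hoddn
  have hε4 : εᵀ * A * ε = -A := by
    have h : εᵀ * (ε * A * εᵀ) * ε = εᵀ * (-A) * ε := by rw [hε3]
    have hL : εᵀ * (ε * A * εᵀ) * ε = A := by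
      calc εᵀ * (ε * A * εᵀ) * ε = εᵀ * (ε * (A * (εᵀ * ε))) := by simp only [Matrix.mul_assoc]
        _ = εᵀ * (ε * A) := by rw [hε2, Matrix.mul_one]
        _ = A := by rw [← Matrix.mul_assoc, hε2, Matrix.one_mul]
    rw [hL, Matrix.mul_neg, Matrix.neg_mul] at h
    exact neg_eq_iff_eq_neg.mp h.symm
  -- conjugation of powers
  have hconjpow : ∀ (W : Matrix (Fin n) (Fin n) ℝ), W * Wᵀ = 1 → Wᵀ * W = 1 →
      Wᵀ * A * W = -A → ∀ k, Wᵀ * A ^ k * W = (-1 : ℝ) ^ k • A ^ k := by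
    intro W hWW hWtW hWAW k
    have key : ∀ k, Wᵀ * A ^ k * W = (-A) ^ k := by
      intro k
      induction k with
      | zero => simp [hWtW]
      | succ k ih =>
        have step : Wᵀ * A ^ (k + 1) * W = (Wᵀ * A ^ k * W) * (Wᵀ * A * W) := by
          rw [pow_succ]
          simp only [Matrix.mul_assoc]
          rw [← Matrix.mul_assoc W Wᵀ (A * W), hWW, Matrix.one_mul]
        rw [step, ih, hWAW, ← pow_succ]
    rw [key k, ← neg_one_smul ℝ A, _root_.smul_pow]
  -- conjugation preserves membership in T
  have hmem : ∀ (W : Matrix (Fin n) (Fin n) ℝ), W * Wᵀ = 1 → Wᵀ * W = 1 → Wᵀ * A * W = -A →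
      ∀ X ∈ T, W * X * Wᵀ ∈ T := by
    intro W hWW hWtW hWAW X hX
    rw [hT] at hX ⊢
    obtain ⟨hX1, hX2, hX3, hX4⟩ := hX
    have htrc : ∀ M N : Matrix (Fin n) (Fin n) ℝ,
        Matrix.trace (W * M * Wᵀ * N) = Matrix.trace (M * (Wᵀ * N * W)) := by
      intro M N
      calc Matrix.trace (W * M * Wᵀ * N) = Matrix.trace (W * (M * Wᵀ * N)) := by
            simp only [Matrix.mul_assoc]
        _ = Matrix.trace ((M * Wᵀ * N) * W) := Matrix.trace_mul_comm _ _
        _ = Matrix.trace (M * (Wᵀ * N * W)) := by simp only [Matrix.mul_assoc]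
    refine ⟨?_, ?_, ?_, ?_⟩
    · rw [Matrix.transpose_mul, Matrix.transpose_mul, Matrix.transpose_transpose, hX1,
        Matrix.mul_assoc]
    · calc Matrix.trace (W * X * Wᵀ) = Matrix.trace (Wᵀ * (W * X)) :=
            Matrix.trace_mul_comm (W * X) Wᵀ
        _ = Matrix.trace X := by rw [← Matrix.mul_assoc, hWtW, Matrix.one_mul]
        _ = 0 := hX2
    · rw [htrc X A, hWAW, Matrix.mul_neg, Matrix.trace_neg, hX3, neg_zero]
    · intro β hβ1 hβ2
      rw [htrc X (A ^ (2 * β))]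
      have : Wᵀ * A ^ (2 * β) * W = A ^ (2 * β) := by
        rw [hconjpow W hWW hWtW hWAW, Even.neg_one_pow (even_two_mul β), one_smul]
      rw [this, hX4 β hβ1 hβ2]
  -- the two conjugation endomorphisms of T
  let φ : Matrix (Fin n) (Fin n) ℝ →ₗ[ℝ] Matrix (Fin n) (Fin n) ℝ :=
    { toFun := fun X => ε * X * εᵀ
      map_add' := fun X Y => by rw [Matrix.mul_add, Matrix.add_mul]
      map_smul' := fun c X => by rw [Matrix.mul_smul, Matrix.smul_mul]; rfl }
  let ψ : Matrix (Fin n) (Fin n) ℝ →ₗ[ℝ] Matrix (Fin n) (Fin n) ℝ :=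
    { toFun := fun X => εᵀ * X * ε
      map_add' := fun X Y => by rw [Matrix.mul_add, Matrix.add_mul]
      map_smul' := fun c X => by rw [Matrix.mul_smul, Matrix.smul_mul]; rfl }
  have hφmem : ∀ X ∈ T, φ X ∈ T := fun X hX => hmem ε hε1 hε2 hε4 X hX
  have hψmem : ∀ X ∈ T, ψ X ∈ T := by
    intro X hX
    have h := hmem εᵀ (by rw [Matrix.transpose_transpose]; exact hε2)
      (by rw [Matrix.transpose_transpose]; exact hε1)
      (by rw [Matrix.transpose_transpose]; exact hε3) X hX
    rwa [Matrix.transpose_transpose] at h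
  set j : Module.End ℝ T := φ.restrict hφmem with hj
  set j' : Module.End ℝ T := ψ.restrict hψmem with hj'
  have hjapp : ∀ X : T, (j X : Matrix (Fin n) (Fin n) ℝ) = ε * X * εᵀ := fun X => rfl
  have hj'app : ∀ X : T, (j' X : Matrix (Fin n) (Fin n) ℝ) = εᵀ * X * ε := fun X => rfl
  have hjj' : j * j' = 1 := by
    apply LinearMap.ext; intro X
    apply Subtype.ext
    rw [Module.End.mul_apply, hjapp, hj'app]
    calc ε * (εᵀ * (X : Matrix (Fin n) (Fin n) ℝ) * ε) * εᵀ
        = (ε * εᵀ) * (X : Matrix (Fin n) (Fin n) ℝ) * (ε * εᵀ) := by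
          simp only [Matrix.mul_assoc]
      _ = (X : Matrix (Fin n) (Fin n) ℝ) := by rw [hε1, Matrix.one_mul, Matrix.mul_one]
      _ = ((1 : Module.End ℝ T) X : Matrix (Fin n) (Fin n) ℝ) := rfl
  have hj'j : j' * j = 1 := by
    apply LinearMap.ext; intro X
    apply Subtype.ext
    rw [Module.End.mul_apply, hj'app, hjapp]
    calc εᵀ * (ε * (X : Matrix (Fin n) (Fin n) ℝ) * εᵀ) * ε
        = (εᵀ * ε) * (X : Matrix (Fin n) (Fin n) ℝ) * (εᵀ * ε) := by
          simp only [Matrix.mul_assoc]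
      _ = (X : Matrix (Fin n) (Fin n) ℝ) := by rw [hε2, Matrix.one_mul, Matrix.mul_one]
      _ = ((1 : Module.End ℝ T) X : Matrix (Fin n) (Fin n) ℝ) := rfl
  -- membership facts for elements of T
  have hTsym : ∀ X : T, (X : Matrix (Fin n) (Fin n) ℝ)ᵀ = X := fun X => ((hT X).mp X.2).1
  -- the key anticommutation identity
  have hanti : S * j + j * S = 0 := by
    have hkey : ∀ X Y : T, Matrix.trace (((S (j X) + j (S X) : T) : Matrix (Fin n) (Fin n) ℝ)
        * (Y : Matrix (Fin n) (Fin n) ℝ)) = 0 := by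
      intro X Y
      have negpow : ∀ k : ℕ, (-A) ^ k = (-1 : ℝ) ^ k • A ^ k := by
        intro k; rw [← neg_one_smul ℝ A, _root_.smul_pow]
      have hmodd : Odd (2 * α - 1) := by
        refine ⟨α - 1, by omega⟩
      -- termwise identity
      have t1 : ∀ r ∈ Finset.range (2 * α),
          Matrix.trace ((j X : Matrix (Fin n) (Fin n) ℝ) * A ^ r *
            (Y : Matrix (Fin n) (Fin n) ℝ) * A ^ (2 * α - 1 - r)) =
          -Matrix.trace ((X : Matrix (Fin n) (Fin n) ℝ) * A ^ r *
            (j' Y : Matrix (Fin n) (Fin n) ℝ) * A ^ (2 * α - 1 - r)) := by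
        intro r hr
        rw [Finset.mem_range] at hr
        have hrm : r ≤ 2 * α - 1 := by omega
        rw [hjapp]
        have htrc : Matrix.trace (ε * (X : Matrix (Fin n) (Fin n) ℝ) * εᵀ *
            (A ^ r * (Y : Matrix (Fin n) (Fin n) ℝ) * A ^ (2 * α - 1 - r))) =
            Matrix.trace ((X : Matrix (Fin n) (Fin n) ℝ) *
              (εᵀ * (A ^ r * (Y : Matrix (Fin n) (Fin n) ℝ) * A ^ (2 * α - 1 - r)) * ε)) := by
          calc Matrix.trace (ε * (X : Matrix (Fin n) (Fin n) ℝ) * εᵀ *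
              (A ^ r * (Y : Matrix (Fin n) (Fin n) ℝ) * A ^ (2 * α - 1 - r)))
              = Matrix.trace (ε * ((X : Matrix (Fin n) (Fin n) ℝ) * εᵀ *
                (A ^ r * (Y : Matrix (Fin n) (Fin n) ℝ) * A ^ (2 * α - 1 - r)))) := by
                simp only [Matrix.mul_assoc]
            _ = Matrix.trace (((X : Matrix (Fin n) (Fin n) ℝ) * εᵀ *
                (A ^ r * (Y : Matrix (Fin n) (Fin n) ℝ) * A ^ (2 * α - 1 - r))) * ε) :=
                Matrix.trace_mul_comm _ _
            _ = Matrix.trace ((X : Matrix (Fin n) (Fin n) ℝ) *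
                (εᵀ * (A ^ r * (Y : Matrix (Fin n) (Fin n) ℝ) * A ^ (2 * α - 1 - r)) * ε)) := by
                simp only [Matrix.mul_assoc]
        have hgroup1 : ε * (X : Matrix (Fin n) (Fin n) ℝ) * εᵀ * A ^ r *
            (Y : Matrix (Fin n) (Fin n) ℝ) * A ^ (2 * α - 1 - r) =
            ε * (X : Matrix (Fin n) (Fin n) ℝ) * εᵀ *
            (A ^ r * (Y : Matrix (Fin n) (Fin n) ℝ) * A ^ (2 * α - 1 - r)) := by
          simp only [Matrix.mul_assoc]
        have hfactor : εᵀ * (A ^ r * (Y : Matrix (Fin n) (Fin n) ℝ) * A ^ (2 * α - 1 - r)) * ε =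
            (εᵀ * A ^ r * ε) * (εᵀ * (Y : Matrix (Fin n) (Fin n) ℝ) * ε) *
            (εᵀ * A ^ (2 * α - 1 - r) * ε) := by
          symm
          simp only [Matrix.mul_assoc]
          rw [← Matrix.mul_assoc ε εᵀ, hε1, Matrix.one_mul,
            ← Matrix.mul_assoc ε εᵀ, hε1, Matrix.one_mul]
        rw [hgroup1, htrc, hfactor, hconjpow ε hε1 hε2 hε4, hconjpow ε hε1 hε2 hε4, ← hj'app]
        have hsign : ((-1 : ℝ) ^ r) * ((-1 : ℝ) ^ (2 * α - 1 - r)) = -1 := by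
          rw [← pow_add, Nat.add_sub_cancel' hrm, Odd.neg_one_pow hmodd]
        calc Matrix.trace ((X : Matrix (Fin n) (Fin n) ℝ) *
              ((-1 : ℝ) ^ r • A ^ r * (j' Y : Matrix (Fin n) (Fin n) ℝ) *
                ((-1 : ℝ) ^ (2 * α - 1 - r) • A ^ (2 * α - 1 - r))))
            = ((-1 : ℝ) ^ r * (-1 : ℝ) ^ (2 * α - 1 - r)) *
              Matrix.trace ((X : Matrix (Fin n) (Fin n) ℝ) * A ^ r *
                (j' Y : Matrix (Fin n) (Fin n) ℝ) * A ^ (2 * α - 1 - r)) := by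
              simp only [Matrix.smul_mul, Matrix.mul_smul, Matrix.trace_smul, smul_eq_mul,
                Matrix.mul_assoc]
              ring
          _ = -Matrix.trace ((X : Matrix (Fin n) (Fin n) ℝ) * A ^ r *
                (j' Y : Matrix (Fin n) (Fin n) ℝ) * A ^ (2 * α - 1 - r)) := by
              rw [hsign]; ring
      have e1 : Matrix.trace ((S (j X) : Matrix (Fin n) (Fin n) ℝ)
          * (Y : Matrix (Fin n) (Fin n) ℝ)) =
          -Matrix.trace ((S X : Matrix (Fin n) (Fin n) ℝ) * (j' Y : Matrix (Fin n) (Fin n) ℝ)) := by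
        rw [hS (j X) Y, hS X (j' Y), Finset.sum_congr rfl t1, Finset.sum_neg_distrib]
        ring
      have e2 : Matrix.trace ((S X : Matrix (Fin n) (Fin n) ℝ) *
          (j' Y : Matrix (Fin n) (Fin n) ℝ)) =
          Matrix.trace ((j (S X) : Matrix (Fin n) (Fin n) ℝ) * (Y : Matrix (Fin n) (Fin n) ℝ)) := by
        rw [hjapp, hj'app]
        calc Matrix.trace ((S X : Matrix (Fin n) (Fin n) ℝ) *
            (εᵀ * (Y : Matrix (Fin n) (Fin n) ℝ) * ε))
            = Matrix.trace (((S X : Matrix (Fin n) (Fin n) ℝ) * εᵀ *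
              (Y : Matrix (Fin n) (Fin n) ℝ)) * ε) := by simp only [Matrix.mul_assoc]
          _ = Matrix.trace (ε * ((S X : Matrix (Fin n) (Fin n) ℝ) * εᵀ *
              (Y : Matrix (Fin n) (Fin n) ℝ))) := Matrix.trace_mul_comm _ _
          _ = Matrix.trace (ε * (S X : Matrix (Fin n) (Fin n) ℝ) * εᵀ *
              (Y : Matrix (Fin n) (Fin n) ℝ)) := by simp only [Matrix.mul_assoc]
      rw [Submodule.coe_add, Matrix.add_mul, Matrix.trace_add, e1, e2]
      ring
    -- nondegeneracy: conclude the operator identity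
    apply LinearMap.ext; intro X
    have hZ0 : S (j X) + j (S X) = 0 := by
      set Z : T := S (j X) + j (S X) with hZdef
      have h0 : Matrix.trace ((Z : Matrix (Fin n) (Fin n) ℝ) * (Z : Matrix (Fin n) (Fin n) ℝ))
          = 0 := hkey X Z
      have hZsym : (Z : Matrix (Fin n) (Fin n) ℝ)ᵀ = (Z : Matrix (Fin n) (Fin n) ℝ) := hTsym Z
      have hsum : ∑ i, ∑ k, ((Z : Matrix (Fin n) (Fin n) ℝ) i k) ^ 2 = 0 := by
        rw [← h0, Matrix.trace]
        apply Finset.sum_congr rfl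
        intro i _
        rw [Matrix.diag_apply, Matrix.mul_apply]
        apply Finset.sum_congr rfl
        intro k _
        have : (Z : Matrix (Fin n) (Fin n) ℝ) k i = (Z : Matrix (Fin n) (Fin n) ℝ) i k :=
          (Matrix.transpose_apply _ i k).symm.trans (congrFun (congrFun hZsym i) k)
        rw [this, sq]
      have hZ0' : (Z : Matrix (Fin n) (Fin n) ℝ) = 0 := by
        ext i k
        have h1 := (Finset.sum_eq_zero_iff_of_nonneg
          (fun i _ => Finset.sum_nonneg (fun k _ => sq_nonneg _))).mp hsum i (Finset.mem_univ i)
        have h2 := (Finset.sum_eq_zero_iff_of_nonneg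
          (fun k _ => sq_nonneg _)).mp h1 k (Finset.mem_univ k)
        simpa using sq_eq_zero_iff.mp h2
      exact Subtype.ext hZ0'
    simpa [LinearMap.add_apply, Module.End.mul_apply] using hZ0
  -- finish: odd traces vanish
  intro q hq
  have hSj : S * j = -(j * S) := by
    have h := eq_neg_of_add_eq_zero_left (G := Module.End ℝ T) hanti; exact h
  have hpowq : ∀ m : ℕ, S ^ m * j = (-1 : ℝ) ^ m • (j * S ^ m) := by
    intro m
    induction m with
    | zero => simp
    | succ k ih =>
      have hSj' : S * j = (-1 : ℝ) • (j * S) := by rw [hSj]; exact (neg_one_smul ℝ (j * S)).symm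
      rw [pow_succ, _root_.mul_assoc, hSj', mul_smul_comm, ← _root_.mul_assoc, ih,
        smul_mul_assoc, smul_smul, _root_.mul_assoc, ← pow_succ S k, ← pow_succ' (-1 : ℝ) k]
  have h1 : LinearMap.trace ℝ T (S ^ q) = (-1 : ℝ) ^ q * LinearMap.trace ℝ T (S ^ q) := by
    conv_lhs => rw [← mul_one (S ^ q), ← hjj', ← _root_.mul_assoc]
    rw [hpowq q, smul_mul_assoc, _root_.map_smul, smul_eq_mul]
    congr 1
    rw [LinearMap.trace_mul_comm, ← _root_.mul_assoc, hj'j, one_mul]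
  rw [Odd.neg_one_pow hq] at h1
  linarith
end
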